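/- arXiv:1907.00660 — 8 statements merged into one kernel-verified Lean document; each statement's English description precedes it below -/
import Mathlib

section
/- Let X be a Banach lattice and A ⊆ X a solid subset. Then a point a ∈ A is an extreme point of A (in the usual sense) if and only if |a| is an order extreme point of A. -/
open Set Metric

variable {X : Type*} [NormedAddCommGroup X] [Lattice X] [IsOrderedAddMonoid X] [HasSolidNorm X]
  [NormedSpace ℝ X] [PosSMulStrictMono ℝ X] [PosSMulReflectLT ℝ X]
  [CompleteSpace X]

/-- A set is solid if `|x| ≤ |z|` with `z ∈ A` implies `x ∈ A`. -/
def IsSolidSet (A : Set X) : Prop := ∀ ⦃x z : X⦄, z ∈ A → |x| ≤ |z| → x ∈ A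

/-- The set of order extreme points of `A`. -/
def orderExtremePoints (A : Set X) : Set X :=
  {a | a ∈ A ∧ ∀ x₀ ∈ A, ∀ x₁ ∈ A, ∀ t : ℝ, 0 < t → t < 1 →
    a ≤ (1 - t) • x₀ + t • x₁ → x₀ = a ∧ x₁ = a}

private lemma my_smul_sup {c : ℝ} (hc : 0 < c) (x y : X) : c • (x ⊔ y) = c • x ⊔ c • y := by
  apply le_antisymm
  · have hx : x ≤ c⁻¹ • (c • x ⊔ c • y) :=
      calc x = c⁻¹ • (c • x) := (inv_smul_smul₀ hc.ne' x).symm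
        _ ≤ c⁻¹ • (c • x ⊔ c • y) :=
          smul_le_smul_of_nonneg_left le_sup_left (inv_nonneg.2 hc.le)
    have hy : y ≤ c⁻¹ • (c • x ⊔ c • y) :=
      calc y = c⁻¹ • (c • y) := (inv_smul_smul₀ hc.ne' y).symm
        _ ≤ c⁻¹ • (c • x ⊔ c • y) :=
          smul_le_smul_of_nonneg_left le_sup_right (inv_nonneg.2 hc.le)
    have := smul_le_smul_of_nonneg_left (sup_le hx hy) hc.le
    rwa [smul_inv_smul₀ hc.ne'] at this
  · exact sup_le (smul_le_smul_of_nonneg_left le_sup_left hc.le)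
      (smul_le_smul_of_nonneg_left le_sup_right hc.le)

private lemma my_abs_smul {c : ℝ} (hc : 0 ≤ c) (x : X) : |c • x| = c • |x| := by
  rcases hc.eq_or_lt with rfl | hc
  · simp
  · show (c • x) ⊔ -(c • x) = c • (x ⊔ -x)
    rw [my_smul_sup hc, smul_neg]

private lemma cancel_abs {a u : X} (h1 : |a + u| ≤ |a|) (h2 : |a - u| ≤ |a|) : u = 0 := by
  have k1 : |u| ≤ |a| - a := by
    refine abs_le'.2 ⟨?_, ?_⟩
    · exact le_sub_iff_add_le'.2 ((le_abs_self _).trans h1)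
    · refine le_sub_iff_add_le'.2 ?_
      rw [← sub_eq_add_neg]
      exact (le_abs_self _).trans h2
  have k2 : |u| ≤ |a| + a := by
    refine abs_le'.2 ⟨?_, ?_⟩
    · refine sub_le_iff_le_add.1 ?_
      calc u - a = -(a - u) := by abel
        _ ≤ |a - u| := neg_le_abs _
        _ ≤ |a| := h2
    · refine sub_le_iff_le_add.1 ?_
      calc -u - a = -(a + u) := by abel
        _ ≤ |a + u| := neg_le_abs _
        _ ≤ |a| := h1
  have hneg : -a ⊓ a = -|a| := by
    rw [show |a| = a ⊔ -a from rfl, neg_sup, neg_neg]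
  have k3 : |u| ≤ 0 := by
    calc |u| ≤ (|a| - a) ⊓ (|a| + a) := le_inf k1 k2
      _ = |a| + (-a ⊓ a) := by rw [sub_eq_add_neg, ← add_inf]
      _ = 0 := by rw [hneg, add_neg_cancel]
  exact le_antisymm ((le_abs_self u).trans k3) (neg_nonpos.1 ((neg_le_abs u).trans k3))

private lemma riesz_decomp {c u v : X} (hc : 0 ≤ c) (hu : 0 ≤ u) (hv : 0 ≤ v)
    (h : c ≤ u + v) : ∃ p q : X, 0 ≤ p ∧ p ≤ u ∧ 0 ≤ q ∧ q ≤ v ∧ c = p + q := by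
  refine ⟨c ⊓ u, c - c ⊓ u, le_inf hc hu, inf_le_right, sub_nonneg.2 inf_le_left, ?_, by abel⟩
  calc c - c ⊓ u = (c - c) ⊔ (c - u) := sub_inf c u c
    _ = 0 ⊔ (c - u) := by rw [sub_self]
    _ ≤ v := sup_le hv (sub_le_iff_le_add'.2 h)

theorem statement0 (A : Set X) (hA : IsSolidSet A) (a : X) :
    a ∈ Set.extremePoints ℝ A ↔ |a| ∈ orderExtremePoints A := by
  constructor
  · rintro (hmem : a ∈ Set.extremePoints ℝ A)
    obtain ⟨haA, hext'⟩ := mem_extremePoints.1 hmem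
    have hext : ∀ ⦃x₁ : X⦄, x₁ ∈ A → ∀ ⦃x₂ : X⦄, x₂ ∈ A → a ∈ openSegment ℝ x₁ x₂ →
        x₁ = a ∧ x₂ = a := fun x₁ h₁ x₂ h₂ h => hext' x₁ h₁ x₂ h₂ h
    have key : ∀ y ∈ A, |a| ≤ |y| → |y| = |a| := by
      intro y hy hle
      set d := |y| - |a| with hd_def
      have hd : 0 ≤ d := sub_nonneg.2 hle
      have habs : |a| + d = |y| := by rw [hd_def]; abel
      have h1 : a + d ∈ A := hA hy (by
        calc |a + d| ≤ |a| + |d| := abs_add_le _ _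
          _ = |a| + d := by rw [abs_of_nonneg hd]
          _ = |y| := habs)
      have h2 : a - d ∈ A := hA hy (by
        calc |a - d| = |a + -d| := by rw [sub_eq_add_neg]
          _ ≤ |a| + |(-d)| := abs_add_le _ _
          _ = |a| + d := by rw [abs_neg, abs_of_nonneg hd]
          _ = |y| := habs)
      have hseg : a ∈ openSegment ℝ (a + d) (a - d) :=
        ⟨1/2, 1/2, by norm_num, by norm_num, by norm_num, by module⟩
      have hres := hext h1 h2 hseg
      have hd0 : d = 0 := by
        have := hres.1
        have : a + d = a + 0 := by rw [add_zero]; exact this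
        exact add_left_cancel this
      rw [← habs, hd0, add_zero]
    have heA : |a| ∈ A := hA haA (abs_abs a).le
    refine ⟨heA, ?_⟩
    intro x₀ hx₀ x₁ hx₁ t ht0 ht1 hle
    have h1t : (0:ℝ) < 1 - t := by linarith
    have hle' : |a| ≤ (1 - t) • |x₀| + t • |x₁| :=
      hle.trans (add_le_add (smul_le_smul_of_nonneg_left (le_abs_self _) h1t.le)
        (smul_le_smul_of_nonneg_left (le_abs_self _) ht0.le))
    obtain ⟨u, v, hu0, huu, hv0, hvv, hcuv⟩ := riesz_decomp (abs_nonneg a)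
      (smul_nonneg h1t.le (abs_nonneg x₀)) (smul_nonneg ht0.le (abs_nonneg x₁)) hle'
    have hposle : a⁺ ≤ u + v := by
      rw [← hcuv, ← posPart_add_negPart a]
      exact le_add_of_nonneg_right (negPart_nonneg a)
    obtain ⟨p, q, hp0, hpu, hq0, hqv, hpq⟩ := riesz_decomp (posPart_nonneg a) hu0 hv0 hposle
    have ha_eq : a = (p + p - u) + (q + q - v) := by
      have h₁ := posPart_sub_negPart a
      have h₂ := posPart_add_negPart a
      have h3 : a⁻ = u + v - a⁺ := by rw [← hcuv, ← h₂]; abel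
      rw [← h₁, h3, hpq]; abel
    have habs₀ : |p + p - u| ≤ (1 - t) • |x₀| := by
      refine (abs_le'.2 ⟨?_, ?_⟩).trans huu
      · exact sub_le_iff_le_add.2 (by calc p + p ≤ u + u := add_le_add hpu hpu
          _ = u + u := rfl)
      · rw [neg_sub]; exact sub_le_self _ (add_nonneg hp0 hp0)
    have habs₁ : |q + q - v| ≤ t • |x₁| := by
      refine (abs_le'.2 ⟨?_, ?_⟩).trans hvv
      · exact sub_le_iff_le_add.2 (add_le_add hqv hqv)
      · rw [neg_sub]; exact sub_le_self _ (add_nonneg hq0 hq0)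
    set w₀ := (1 - t)⁻¹ • (p + p - u) with hw₀
    set w₁ := t⁻¹ • (q + q - v) with hw₁
    have hwabs₀ : |w₀| ≤ |x₀| := by
      rw [hw₀, my_abs_smul (inv_nonneg.2 h1t.le)]
      calc (1 - t)⁻¹ • |p + p - u| ≤ (1 - t)⁻¹ • ((1 - t) • |x₀|) :=
            smul_le_smul_of_nonneg_left habs₀ (inv_nonneg.2 h1t.le)
        _ = |x₀| := inv_smul_smul₀ h1t.ne' _
    have hwabs₁ : |w₁| ≤ |x₁| := by
      rw [hw₁, my_abs_smul (inv_nonneg.2 ht0.le)]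
      calc t⁻¹ • |q + q - v| ≤ t⁻¹ • (t • |x₁|) :=
            smul_le_smul_of_nonneg_left habs₁ (inv_nonneg.2 ht0.le)
        _ = |x₁| := inv_smul_smul₀ ht0.ne' _
    have hseg : a ∈ openSegment ℝ w₀ w₁ :=
      ⟨1 - t, t, h1t, ht0, by ring, by
        rw [hw₀, hw₁, smul_inv_smul₀ h1t.ne', smul_inv_smul₀ ht0.ne']; exact ha_eq.symm⟩
    obtain ⟨hw₀a, hw₁a⟩ := hext (hA hx₀ hwabs₀) (hA hx₁ hwabs₁) hseg
    have he₀ : |x₀| = |a| := key _ hx₀ (hw₀a ▸ hwabs₀)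
    have he₁ : |x₁| = |a| := key _ hx₁ (hw₁a ▸ hwabs₁)
    have hsum_eq : (1 - t) • x₀ + t • x₁ = |a| := by
      refine le_antisymm ?_ hle
      calc (1 - t) • x₀ + t • x₁ ≤ (1 - t) • |x₀| + t • |x₁| :=
            add_le_add (smul_le_smul_of_nonneg_left (le_abs_self _) h1t.le)
              (smul_le_smul_of_nonneg_left (le_abs_self _) ht0.le)
        _ = |a| := by rw [he₀, he₁, ← add_smul, sub_add_cancel, one_smul]
    have hz : (1 - t) • (|x₀| - x₀) + t • (|x₁| - x₁) = 0 := by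
      calc (1 - t) • (|x₀| - x₀) + t • (|x₁| - x₁)
          = ((1 - t) • |x₀| + t • |x₁|) - ((1 - t) • x₀ + t • x₁) := by module
        _ = |a| - |a| := by rw [he₀, he₁, hsum_eq, ← add_smul, sub_add_cancel, one_smul]
        _ = 0 := sub_self _
    have h0 := (add_eq_zero_iff_of_nonneg
      (smul_nonneg h1t.le (sub_nonneg.2 (le_abs_self _)))
      (smul_nonneg ht0.le (sub_nonneg.2 (le_abs_self _)))).1 hz
    constructor
    · have h00 := (smul_eq_zero.1 h0.1).resolve_left h1t.ne'
      exact (sub_eq_zero.1 h00).symm.trans he₀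
    · have h01 := (smul_eq_zero.1 h0.2).resolve_left ht0.ne'
      exact (sub_eq_zero.1 h01).symm.trans he₁
  · rintro ⟨heA, hord⟩
    have haA : a ∈ A := hA heA (abs_abs a).ge
    refine mem_extremePoints.2 ⟨haA, ?_⟩
    rintro x₀ hx₀ x₁ hx₁ ⟨t₀, t₁, ht₀, ht₁, hsum, heq⟩
    have ht₁1 : t₁ < 1 := by linarith
    have hordle : |a| ≤ (1 - t₁) • |x₀| + t₁ • |x₁| := by
      have : (1 : ℝ) - t₁ = t₀ := by linarith
      rw [this]
      calc |a| = |t₀ • x₀ + t₁ • x₁| := by rw [heq]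
        _ ≤ |t₀ • x₀| + |t₁ • x₁| := abs_add_le _ _
        _ = t₀ • |x₀| + t₁ • |x₁| := by rw [my_abs_smul ht₀.le, my_abs_smul ht₁.le]
    obtain ⟨he₀, he₁⟩ := hord _ (hA hx₀ (abs_abs x₀).le) _ (hA hx₁ (abs_abs x₁).le)
      t₁ ht₁ ht₁1 hordle
    set s := min t₀ t₁ with hs
    have hs0 : 0 < s := lt_min ht₀ ht₁
    set w := x₀ - x₁ with hw
    have key2 : ∀ (c : ℝ) (x : X), 0 < c → c ≤ 1 → |x| = |a| → |a + c • (x - a)| ≤ |a| := by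
      intro c x hc hc1 hxe
      calc |a + c • (x - a)| = |(1 - c) • a + c • x| := by
            rw [show a + c • (x - a) = (1 - c) • a + c • x by module]
        _ ≤ |(1 - c) • a| + |c • x| := abs_add_le _ _
        _ = (1 - c) • |a| + c • |x| := by rw [my_abs_smul (by linarith), my_abs_smul hc.le]
        _ = |a| := by rw [hxe, ← add_smul, sub_add_cancel, one_smul]
    have hx0a : x₀ - a = t₁ • w := by
      have h2 : t₀ = 1 - t₁ := by linarith
      rw [h2] at heq
      calc x₀ - a = x₀ - ((1 - t₁) • x₀ + t₁ • x₁) := by rw [heq]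
        _ = t₁ • w := by rw [hw]; module
    have hx1a : x₁ - a = t₀ • (x₁ - x₀) := by
      have h2 : t₁ = 1 - t₀ := by linarith
      rw [h2] at heq
      calc x₁ - a = x₁ - (t₀ • x₀ + (1 - t₀) • x₁) := by rw [heq]
        _ = t₀ • (x₁ - x₀) := by module
    have c1 : |a + s • w| ≤ |a| := by
      have h := key2 (s / t₁) x₀ (div_pos hs0 ht₁) ((div_le_one ht₁).2 (min_le_right t₀ t₁)) he₀
      rwa [hx0a, smul_smul, div_mul_cancel₀ _ ht₁.ne'] at h
    have c2 : |a - s • w| ≤ |a| := by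
      have h := key2 (s / t₀) x₁ (div_pos hs0 ht₀) ((div_le_one ht₀).2 (min_le_left t₀ t₁)) he₁
      rwa [hx1a, smul_smul, div_mul_cancel₀ _ ht₀.ne',
        show s • (x₁ - x₀) = -(s • w) by rw [hw]; module, ← sub_eq_add_neg] at h
    have hw0 : w = 0 := by
      have := cancel_abs c1 c2
      exact (smul_eq_zero.1 this).resolve_left hs0.ne'
    have hx01 : x₀ = x₁ := sub_eq_zero.1 hw0
    have hx0 : x₀ = a := by
      rw [← hx01] at heq
      rw [← heq, ← add_smul, hsum, one_smul]
    exact ⟨hx0, hx01.symm.trans hx0⟩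
end

section
/- Let X be a Banach lattice and C ⊆ X any subset. Then so(ch(|C|)) = ch(so(C)), i.e., the solid hull of the convex hull of |C| equals the convex hull of the solid hull of C. -/
open Set Metric

variable {X : Type*} [NormedAddCommGroup X] [Lattice X] [IsOrderedAddMonoid X] [HasSolidNorm X]
  [NormedSpace ℝ X] [PosSMulStrictMono ℝ X]
  [CompleteSpace X]

/-- A subset of the positive cone is positive-solid if `0 ≤ x ≤ z` with `z ∈ A`
implies `x ∈ A`. -/
def IsPosSolidSet (A : Set X) : Prop := ∀ ⦃x z : X⦄, 0 ≤ x → z ∈ A → x ≤ z → x ∈ A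

/-- The solid hull of a set: the smallest solid set containing it. -/
def solidHull (C : Set X) : Set X := {z : X | ∃ x ∈ C, |z| ≤ |x|}

/-- The solid convex hull: the smallest convex solid set containing `C`. -/
def solidConvexHull (C : Set X) : Set X :=
  ⋂₀ {D : Set X | C ⊆ D ∧ Convex ℝ D ∧ IsSolidSet D}

private lemma abs_smul_le' (w : ℝ) (hw : 0 ≤ w) (u : X) : |w • u| ≤ w • |u| :=
  abs_le'.mpr ⟨smul_le_smul_of_nonneg_left (le_abs_self u) hw,
    by rw [← smul_neg]; exact smul_le_smul_of_nonneg_left (neg_le_abs u) hw⟩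

/-- Riesz decomposition for two summands. -/
private lemma riesz_two (z y₁ y₂ : X) (h₁ : 0 ≤ y₁) (h₂ : 0 ≤ y₂) (h : |z| ≤ y₁ + y₂) :
    ∃ z₁ z₂ : X, z = z₁ + z₂ ∧ |z₁| ≤ y₁ ∧ |z₂| ≤ y₂ := by
  set z₁ : X := (z ⊔ -y₁) ⊓ y₁ with hz₁def
  have hz_le : z ≤ y₁ + y₂ := (le_abs_self z).trans h
  have hz_ge : -y₁ - y₂ ≤ z := by
    have h' : -(y₁ + y₂) ≤ z := le_trans (neg_le_neg h) (neg_le.mpr (neg_le_abs z))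
    rwa [neg_add, ← sub_eq_add_neg] at h'
  refine ⟨z₁, z - z₁, by abel, ?_, ?_⟩
  · refine abs_le'.mpr ⟨inf_le_right, ?_⟩
    rw [neg_le]
    exact le_inf le_sup_right ((neg_nonpos.2 h₁).trans h₁)
  · refine abs_le'.mpr ⟨?_, ?_⟩
    · -- z - z₁ ≤ y₂ ⟺ z - y₂ ≤ z₁
      rw [sub_le_comm]
      refine le_inf (le_sup_of_le_left (sub_le_self z h₂)) ?_
      rw [sub_le_iff_le_add]
      exact hz_le
    · -- -(z - z₁) ≤ y₂ ⟺ z₁ ≤ z + y₂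
      rw [neg_sub, sub_le_iff_le_add']
      exact inf_le_of_left_le (sup_le (le_add_of_nonneg_right h₂)
        ((sub_le_iff_le_add).mp hz_ge))

/-- Finite Riesz decomposition. -/
private lemma riesz_fin {ι : Type*} (s : Finset ι) (y : ι → X) (z : X)
    (hy : ∀ i ∈ s, 0 ≤ y i) (h : |z| ≤ ∑ i ∈ s, y i) :
    ∃ f : ι → X, (∀ i ∈ s, |f i| ≤ y i) ∧ z = ∑ i ∈ s, f i := by
  classical
  induction s using Finset.cons_induction generalizing z with
  | empty =>
    simp only [Finset.sum_empty] at h ⊢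
    have hz0 : z = 0 := le_antisymm ((le_abs_self z).trans h)
      (neg_nonpos.mp ((neg_le_abs z).trans h))
    exact ⟨0, by simp, by simp [hz0]⟩
  | cons a t ha ih =>
    rw [Finset.sum_cons] at h
    have hta : 0 ≤ ∑ i ∈ t, y i :=
      Finset.sum_nonneg fun i hi => hy i (Finset.mem_cons_of_mem hi)
    obtain ⟨z₁, z₂, hz, hz₁, hz₂⟩ :=
      riesz_two z (y a) (∑ i ∈ t, y i) (hy a (Finset.mem_cons_self a t)) hta h
    obtain ⟨f, hf, hfs⟩ := ih z₂ (fun i hi => hy i (Finset.mem_cons_of_mem hi)) hz₂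
    refine ⟨Function.update f a z₁, ?_, ?_⟩
    · intro i hi
      rcases Finset.mem_cons.mp hi with rfl | hit
      · simpa using hz₁
      · rw [Function.update_of_ne (by rintro rfl; exact ha hit)]
        exact hf i hit
    · rw [Finset.sum_cons, Function.update_self, hz, hfs]
      congr 1
      exact Finset.sum_congr rfl fun i hi =>
        (Function.update_of_ne (by rintro rfl; exact ha hi) _ _).symm

theorem statement1 (C : Set X) :
    solidHull (convexHull ℝ (abs '' C)) = convexHull ℝ (solidHull C) := by
  apply Set.Subset.antisymm
  · -- so(ch(|C|)) ⊆ ch(so(C))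
    rintro z ⟨y, hy, hzy⟩
    rw [convexHull_eq] at hy
    obtain ⟨ι, t, w, v, hw, hw1, hv, hvy⟩ := hy
    choose x hxC hxv using fun i (hi : i ∈ t) => hv i hi
    have hvnn : ∀ i ∈ t, (0:X) ≤ v i := fun i hi => by
      rw [← hxv i hi]; exact abs_nonneg _
    have hy_eq : y = ∑ i ∈ t, w i • v i := by
      rw [← hvy, Finset.centerMass, hw1, inv_one, one_smul]
    have hy_nonneg : 0 ≤ y := by
      rw [hy_eq]
      exact Finset.sum_nonneg fun i hi => smul_nonneg (hw i hi) (hvnn i hi)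
    have habs : |z| ≤ ∑ i ∈ t, w i • v i := by
      rw [← hy_eq]; exact hzy.trans (le_of_eq (abs_of_nonneg hy_nonneg))
    have hynn : ∀ i ∈ t, 0 ≤ w i • v i := fun i hi =>
      smul_nonneg (hw i hi) (hvnn i hi)
    obtain ⟨f, hf, hfz⟩ := riesz_fin t (fun i => w i • v i) z hynn habs
    classical
    set u : ι → X := fun i => if w i = 0 then 0 else (w i)⁻¹ • f i with hu
    have hfu : ∀ i ∈ t, f i = w i • u i := by
      intro i hi
      by_cases h0 : w i = 0
      · have h1 : |f i| ≤ (0:X) := by simpa [h0] using hf i hi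
        have hfi : f i = 0 := le_antisymm ((le_abs_self _).trans h1)
          (neg_nonpos.mp ((neg_le_abs _).trans h1))
        simp [hu, h0, hfi]
      · simp [hu, h0, smul_smul, mul_inv_cancel₀ h0]
    have huC : ∀ i ∈ t, u i ∈ solidHull C := by
      intro i hi
      refine ⟨x i hi, hxC i hi, ?_⟩
      rw [hxv i hi]
      by_cases h0 : w i = 0
      · simp only [hu, if_pos h0, abs_zero]
        exact hvnn i hi
      · have hwpos : 0 < w i := lt_of_le_of_ne (hw i hi) (Ne.symm h0)
        have h1 : |u i| ≤ (w i)⁻¹ • |f i| := by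
          simp only [hu, if_neg h0]
          exact abs_smul_le' _ (inv_nonneg.2 hwpos.le) _
        have h2 : (w i)⁻¹ • |f i| ≤ (w i)⁻¹ • (w i • v i) :=
          smul_le_smul_of_nonneg_left (hf i hi) (inv_nonneg.2 hwpos.le)
        have h3 : (w i)⁻¹ • (w i • v i) = v i := by
          rw [smul_smul, inv_mul_cancel₀ h0, one_smul]
        exact h1.trans (h2.trans (le_of_eq h3))
    have hzsum : z = ∑ i ∈ t, w i • u i := by
      rw [hfz]; exact Finset.sum_congr rfl hfu
    rw [hzsum]
    exact Convex.sum_mem (convex_convexHull ℝ _) hw hw1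
      fun i hi => subset_convexHull ℝ _ (huC i hi)
  · -- ch(so(C)) ⊆ so(ch(|C|))
    apply convexHull_min
    · rintro z ⟨x, hx, hzx⟩
      exact ⟨|x|, subset_convexHull ℝ _ ⟨x, hx, rfl⟩, hzx.trans (le_of_eq (abs_abs x).symm)⟩
    · have hpos : ∀ y ∈ convexHull ℝ (abs '' C), (0:X) ≤ y := by
        intro y hy
        have hsub : convexHull ℝ (abs '' C) ⊆ {v : X | 0 ≤ v} := by
          apply convexHull_min
          · rintro v ⟨x, _, rfl⟩; exact abs_nonneg x
          · intro a ha b hb s r hs hr hsr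
            exact add_nonneg (smul_nonneg hs ha) (smul_nonneg hr hb)
        exact hsub hy
      rintro z₁ ⟨y₁, hy₁, hz₁⟩ z₂ ⟨y₂, hy₂, hz₂⟩ s r hs hr hsr
      refine ⟨s • y₁ + r • y₂, (convex_convexHull ℝ _) hy₁ hy₂ hs hr hsr, ?_⟩
      have hnn : (0:X) ≤ s • y₁ + r • y₂ :=
        add_nonneg (smul_nonneg hs (hpos _ hy₁)) (smul_nonneg hr (hpos _ hy₂))
      rw [abs_of_nonneg hnn]
      calc |s • z₁ + r • z₂| ≤ |s • z₁| + |r • z₂| := abs_add_le _ _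
        _ ≤ s • |z₁| + r • |z₂| := add_le_add (abs_smul_le' s hs z₁) (abs_smul_le' r hr z₂)
        _ ≤ s • y₁ + r • y₂ := add_le_add
            (smul_le_smul_of_nonneg_left (hz₁.trans (le_of_eq (abs_of_nonneg (hpos _ hy₁)))) hs)
            (smul_le_smul_of_nonneg_left (hz₂.trans (le_of_eq (abs_of_nonneg (hpos _ hy₂)))) hr)
end

section
/- Let X be a Banach lattice and C ⊆ X. Then (1) the solid convex hull satisfies sch(C) = ch(so(C)) = sch(|C|), and consequently csch(C) = csch(|C|); and (2) if moreover C ⊆ X₊ (all elements of C are positive), then sch(C) = so(ch(C)). -/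
open Set Metric

variable {X : Type*} [NormedAddCommGroup X] [Lattice X] [HasSolidNorm X] [IsOrderedAddMonoid X]
  [NormedSpace ℝ X] [PosSMulStrictMono ℝ X]
  [CompleteSpace X]

lemma my_abs_smul_le {t : ℝ} (ht : 0 ≤ t) (z : X) : |t • z| ≤ t • |z| := by
  refine abs_le'.mpr ⟨smul_le_smul_of_nonneg_left (le_abs_self z) ht, ?_⟩
  rw [← smul_neg]
  exact smul_le_smul_of_nonneg_left (neg_le_abs z) ht

lemma my_riesz {a b x : X} (ha : 0 ≤ a) (hb : 0 ≤ b) (h : |x| ≤ a + b) :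
    ∃ x₁ x₂ : X, x = x₁ + x₂ ∧ |x₁| ≤ a ∧ |x₂| ≤ b := by
  have hxa : x ≤ a + b := le_trans (le_abs_self x) h
  have hxb : -(a + b) ≤ x :=
    le_trans (neg_le_neg h) (by simpa using neg_le_neg (neg_le_abs x))
  refine ⟨(x ⊓ a) ⊔ (-a), x - ((x ⊓ a) ⊔ (-a)), by abel, ?_, ?_⟩
  · exact abs_le'.mpr ⟨sup_le inf_le_right (neg_le.mp (neg_le_self ha)),
      neg_le.mp le_sup_right⟩
  · refine abs_le'.mpr ⟨?_, ?_⟩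
    · refine sub_le_comm.mp (le_sup_of_le_left (le_inf (sub_le_self x hb) ?_))
      exact sub_le_iff_le_add.mpr hxa
    · rw [neg_sub, sub_le_iff_le_add]
      refine sup_le (inf_le_left.trans (le_add_of_nonneg_left hb)) ?_
      rw [← sub_le_iff_le_add', sub_eq_add_neg, ← neg_add]
      exact hxb

lemma subset_solidHull (C : Set X) : C ⊆ solidHull C := fun x hx => ⟨x, hx, le_rfl⟩

lemma isSolid_solidHull (C : Set X) : IsSolidSet (solidHull C) := by
  rintro x z ⟨c, hc, hzc⟩ hxz
  exact ⟨c, hc, hxz.trans hzc⟩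

lemma subset_sch (C : Set X) : C ⊆ solidConvexHull C :=
  fun x hx => mem_sInter.mpr fun D hD => hD.1 hx

lemma convex_sch (C : Set X) : Convex ℝ (solidConvexHull C) :=
  convex_sInter fun D hD => hD.2.1

lemma isSolid_sch (C : Set X) : IsSolidSet (solidConvexHull C) := by
  intro x z hz hxz
  exact mem_sInter.mpr fun D hD => hD.2.2 (mem_sInter.mp hz D hD) hxz

lemma sch_min {C D : Set X} (hCD : C ⊆ D) (hconv : Convex ℝ D) (hsolid : IsSolidSet D) :
    solidConvexHull C ⊆ D := sInter_subset_of_mem ⟨hCD, hconv, hsolid⟩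

set_option maxHeartbeats 1000000 in
lemma isSolid_convexHull_solidHull (C : Set X) :
    IsSolidSet (convexHull ℝ (solidHull C)) := by
  set H := convexHull ℝ (solidHull C) with hH
  set S : Set X := {z | z ∈ H ∧ ∀ x : X, |x| ≤ |z| → x ∈ H} with hS
  have hsub : solidHull C ⊆ S := by
    intro z hz
    exact ⟨subset_convexHull ℝ _ hz, fun x hx => subset_convexHull ℝ _ (isSolid_solidHull C hz hx)⟩
  have hconv : Convex ℝ S := by
    rintro z₁ ⟨hz₁, hz₁'⟩ z₂ ⟨hz₂, hz₂'⟩ t₁ t₂ ht₁ ht₂ hsum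
    refine ⟨(convex_convexHull ℝ _) hz₁ hz₂ ht₁ ht₂ hsum, fun x hx => ?_⟩
    rcases eq_or_lt_of_le ht₁ with h1 | h1
    · have ht₂1 : t₂ = 1 := by linarith
      subst ht₂1
      rw [← h1, zero_smul, zero_add, one_smul] at hx
      exact hz₂' x hx
    rcases eq_or_lt_of_le ht₂ with h2 | h2
    · have ht₁1 : t₁ = 1 := by linarith
      subst ht₁1
      rw [← h2, zero_smul, add_zero, one_smul] at hx
      exact hz₁' x hx
    · have habs : |t₁ • z₁ + t₂ • z₂| ≤ t₁ • |z₁| + t₂ • |z₂| := by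
        calc |t₁ • z₁ + t₂ • z₂| ≤ |t₁ • z₁| + |t₂ • z₂| := abs_add_le _ _
          _ ≤ t₁ • |z₁| + t₂ • |z₂| := by
              gcongr <;> [exact my_abs_smul_le ht₁ z₁; exact my_abs_smul_le ht₂ z₂]
      obtain ⟨x₁, x₂, hxeq, hx₁, hx₂⟩ := my_riesz
        (smul_nonneg ht₁ (abs_nonneg z₁)) (smul_nonneg ht₂ (abs_nonneg z₂))
        (hx.trans habs)
      have hw₁ : t₁⁻¹ • x₁ ∈ H := by
        refine hz₁' _ ?_
        calc |t₁⁻¹ • x₁| ≤ t₁⁻¹ • |x₁| := my_abs_smul_le (by positivity) x₁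
          _ ≤ t₁⁻¹ • (t₁ • |z₁|) := smul_le_smul_of_nonneg_left hx₁ (by positivity)
          _ = |z₁| := inv_smul_smul₀ (ne_of_gt h1) _
      have hw₂ : t₂⁻¹ • x₂ ∈ H := by
        refine hz₂' _ ?_
        calc |t₂⁻¹ • x₂| ≤ t₂⁻¹ • |x₂| := my_abs_smul_le (by positivity) x₂
          _ ≤ t₂⁻¹ • (t₂ • |z₂|) := smul_le_smul_of_nonneg_left hx₂ (by positivity)
          _ = |z₂| := inv_smul_smul₀ (ne_of_gt h2) _
      have : x = t₁ • (t₁⁻¹ • x₁) + t₂ • (t₂⁻¹ • x₂) := by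
        rw [smul_inv_smul₀ (ne_of_gt h1), smul_inv_smul₀ (ne_of_gt h2)]; exact hxeq
      rw [this]
      exact (convex_convexHull ℝ _) hw₁ hw₂ ht₁ ht₂ hsum
  intro x z hz hxz
  have : H ⊆ S := convexHull_min hsub hconv
  exact (this hz).2 x hxz

lemma sch_eq_ch_so (C : Set X) : solidConvexHull C = convexHull ℝ (solidHull C) := by
  apply le_antisymm
  · exact sch_min ((subset_solidHull C).trans (subset_convexHull ℝ _))
      (convex_convexHull ℝ _) (isSolid_convexHull_solidHull C)
  · refine convexHull_min ?_ (convex_sch C)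
    rintro z ⟨c, hc, hzc⟩
    exact isSolid_sch C (subset_sch C hc) hzc

lemma solidHull_abs (C : Set X) : solidHull (abs '' C) = solidHull C := by
  ext z
  constructor
  · rintro ⟨_, ⟨c, hc, rfl⟩, h⟩; exact ⟨c, hc, by rwa [abs_abs] at h⟩
  · rintro ⟨c, hc, h⟩; exact ⟨|c|, ⟨c, hc, rfl⟩, by rwa [abs_abs]⟩

theorem statement2 (C : Set X) :
    solidConvexHull C = convexHull ℝ (solidHull C) ∧
    solidConvexHull C = solidConvexHull (abs '' C) ∧
    closure (solidConvexHull C) = closure (solidConvexHull (abs '' C)) ∧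
    (C ⊆ {x : X | 0 ≤ x} → solidConvexHull C = solidHull (convexHull ℝ C)) := by
  have h2 : solidConvexHull C = solidConvexHull (abs '' C) := by
    rw [sch_eq_ch_so, sch_eq_ch_so, solidHull_abs]
  refine ⟨sch_eq_ch_so C, h2, by rw [h2], fun hpos => ?_⟩
  have hchpos : ∀ y ∈ convexHull ℝ C, 0 ≤ y := fun y hy =>
    convexHull_min hpos (show Convex ℝ (Set.Ici (0:X)) from convex_Ici 0) hy
  apply le_antisymm
  · refine sch_min (fun c hc => ⟨c, subset_convexHull ℝ _ hc, le_rfl⟩) ?_ (isSolid_solidHull _)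
    rintro z₁ ⟨y₁, hy₁, h₁⟩ z₂ ⟨y₂, hy₂, h₂⟩ t₁ t₂ ht₁ ht₂ hsum
    have hy : t₁ • y₁ + t₂ • y₂ ∈ convexHull ℝ C :=
      (convex_convexHull ℝ C) hy₁ hy₂ ht₁ ht₂ hsum
    refine ⟨t₁ • y₁ + t₂ • y₂, hy, ?_⟩
    rw [abs_of_nonneg (hchpos _ hy)]
    calc |t₁ • z₁ + t₂ • z₂| ≤ |t₁ • z₁| + |t₂ • z₂| := abs_add_le _ _
      _ ≤ t₁ • |z₁| + t₂ • |z₂| := by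
          gcongr <;> [exact my_abs_smul_le ht₁ z₁; exact my_abs_smul_le ht₂ z₂]
      _ ≤ t₁ • y₁ + t₂ • y₂ := by
          gcongr
          · exact h₁.trans_eq (abs_of_nonneg (hchpos _ hy₁))
          · exact h₂.trans_eq (abs_of_nonneg (hchpos _ hy₂))
  · rintro z ⟨y, hy, hzy⟩
    exact isSolid_sch C (convexHull_min (subset_sch C) (convex_sch C) hy) hzy
end

section
/- Let X be a Banach lattice and A ⊆ X₊ a nonempty, norm-closed, norm-bounded, convex, positive-solid set. Suppose x ∈ X₊ does not belong to A. Then there exists a positive continuous linear functional f on X such that f(x) > sup_{a ∈ A} f(a). -/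
open Set Metric

variable {X : Type*} [NormedAddCommGroup X] [Lattice X] [HasSolidNorm X] [IsOrderedAddMonoid X]
  [NormedSpace ℝ X] [PosSMulStrictMono ℝ X] [PosSMulReflectLT ℝ X]
  [CompleteSpace X]

theorem statement5 (A : Set X) (hne : A.Nonempty) (hclosed : IsClosed A)
    (hbdd : Bornology.IsBounded A) (hconv : Convex ℝ A)
    (hApos : A ⊆ {x : X | 0 ≤ x}) (hsolid : IsPosSolidSet A)
    (x : X) (hx : 0 ≤ x) (hxA : x ∉ A) :
    ∃ f : X →L[ℝ] ℝ, (∀ y : X, 0 ≤ y → 0 ≤ f y) ∧ sSup (f '' A) < f x := by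
  obtain ⟨a₀, ha₀⟩ := hne
  set D : Set X := {y | ∃ a ∈ A, y ≤ a} with hD
  have hDconv : Convex ℝ D := by
    rintro y₀ ⟨b₀, hb₀, hy₀⟩ y₁ ⟨b₁, hb₁, hy₁⟩ s t hs ht hst
    exact ⟨s • b₀ + t • b₁, hconv hb₀ hb₁ hs ht hst,
      add_le_add (smul_le_smul_of_nonneg_left hy₀ hs) (smul_le_smul_of_nonneg_left hy₁ ht)⟩
  have hxD : x ∉ closure D := by
    intro hmem
    obtain ⟨y, hy, hlim⟩ := mem_closure_iff_seq_limit.1 hmem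
    have hmemA : ∀ n, y n ⊔ 0 ∈ A := by
      intro n
      obtain ⟨a, ha, hya⟩ := hy n
      exact hsolid le_sup_right ha (sup_le hya (hApos ha))
    have hlim' : Filter.Tendsto (fun n => y n ⊔ 0) Filter.atTop (nhds (x ⊔ 0)) :=
      hlim.sup_nhds tendsto_const_nhds
    rw [sup_of_le_left hx] at hlim'
    exact hxA (hclosed.mem_of_tendsto hlim' (Filter.Eventually.of_forall hmemA))
  obtain ⟨f, u, hfu, hux⟩ :=
    geometric_hahn_banach_closed_point (hDconv.closure) isClosed_closure hxD
  refine ⟨f, ?_, ?_⟩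
  · intro p hp
    by_contra h
    push_neg at h
    set t : ℝ := (|u| + 1) / (-f p) with htdef
    have ht : 0 < t := div_pos (by positivity) (by linarith)
    have hmem : -(t • p) ∈ D := ⟨a₀, ha₀, le_trans (neg_nonpos.2 (smul_nonneg ht.le hp)) (hApos ha₀)⟩
    have hlt := hfu _ (subset_closure hmem)
    rw [map_neg, map_smul] at hlt
    have hlt' : -(t * f p) < u := by simpa using hlt
    have h0 : -f p ≠ 0 := by linarith
    have key : t * f p = -(|u| + 1) := by
      rw [htdef]; field_simp; simp [h.ne]
    rw [key, neg_neg] at hlt'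
    linarith [le_abs_self u]
  · refine lt_of_le_of_lt (csSup_le (Set.Nonempty.image f ⟨a₀, ha₀⟩) ?_) hux
    rintro r ⟨a, ha, rfl⟩
    exact (hfu a (subset_closure ⟨a, ha, le_refl a⟩)).le
end

section
/- (Solid Krein–Milman theorem) Let X be a Banach lattice and A ⊆ X₊ a nonempty, convex, positive-solid subset that is compact in the weak topology. Then A coincides with the norm closure of the smallest convex positive-solid set containing the order extreme points of A. -/
open Set Metric
open Topology Filter Pointwise

variable {X : Type*} [NormedAddCommGroup X] [Lattice X] [HasSolidNorm X] [IsOrderedAddMonoid X]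
  [NormedSpace ℝ X] [PosSMulStrictMono ℝ X]
  [CompleteSpace X]

noncomputable instance : ContinuousSMul ℝ (WeakSpace ℝ X) :=
  WeakBilin.instContinuousSMul (topDualPairing ℝ X).flip

instance : LocallyConvexSpace ℝ (WeakSpace ℝ X) :=
  WeakBilin.locallyConvexSpace (B := (topDualPairing ℝ X).flip)

instance : T2Space (WeakSpace ℝ X) := by
  constructor
  intro x y hxy
  obtain ⟨f, hf⟩ := SeparatingDual.exists_ne_zero (R := ℝ)
    (x := (toWeakSpace ℝ X).symm x - (toWeakSpace ℝ X).symm y) (by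
      intro h
      exact hxy ((toWeakSpace ℝ X).symm.injective (sub_eq_zero.mp h)))
  have hc : Continuous fun w : WeakSpace ℝ X => f ((toWeakSpace ℝ X).symm w) :=
    WeakBilin.eval_continuous (topDualPairing ℝ X).flip f
  refine separated_by_continuous hc ?_
  simp only [map_sub] at hf
  intro h; exact hf (by rw [h]; ring)

lemma exists_pos_functional (x : X) (hx : ¬ x ≤ 0) :
    ∃ f : X →L[ℝ] ℝ, (∀ k : X, 0 ≤ k → 0 ≤ f k) ∧ 0 < f x := by
  obtain ⟨f, u, hfu, hux⟩ := geometric_hahn_banach_closed_point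
    (convex_Iic (0 : X)) isClosed_Iic (by simpa using hx)
  clear hx
  have h0 : (0:ℝ) < u := by have := hfu 0 (le_refl 0); simpa using this
  refine ⟨f, ?_, by linarith⟩
  intro k hk
  by_contra hneg
  push_neg at hneg
  set t : ℝ := (u + 1) / (-f k) with ht
  have htpos : 0 < t := div_pos (by linarith) (by linarith)
  have hmem : -(t • k) ∈ Iic (0 : X) := by
    simp only [mem_Iic, neg_nonpos]
    exact smul_nonneg htpos.le hk
  have h2 := hfu _ hmem
  rw [map_neg, map_smul] at h2
  have h3 : t * (-f k) = u + 1 := div_mul_cancel₀ _ (by linarith)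
  have h4 : -(t • f k) = t * (-f k) := by simp [smul_eq_mul]
  rw [h4, h3] at h2
  linarith

/-- Any nonempty convex weakly compact subset of a Banach lattice has a point that is
both extreme and (order) maximal. -/
lemma exists_extreme_maximal (F : Set X) (hFne : F.Nonempty) (hFconv : Convex ℝ F)
    (hFcomp : IsCompact (toWeakSpace ℝ X '' F)) :
    ∃ p ∈ F, (∀ z ∈ F, p ≤ z → z = p) ∧
      ∀ x₀ ∈ F, ∀ x₁ ∈ F, ∀ t : ℝ, 0 < t → t < 1 →
        p = (1 - t) • x₀ + t • x₁ → x₀ = p ∧ x₁ = p := by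
  classical
  set 𝒢 : Set (Set X) := {G | G.Nonempty ∧ Convex ℝ G ∧ G ⊆ F ∧
      IsCompact (toWeakSpace ℝ X '' G) ∧
      (∀ x₀ ∈ F, ∀ x₁ ∈ F, ∀ t : ℝ, 0 < t → t < 1 →
        (1 - t) • x₀ + t • x₁ ∈ G → x₀ ∈ G ∧ x₁ ∈ G) ∧
      (∀ x ∈ G, ∀ z ∈ F, x ≤ z → z ∈ G)} with h𝒢
  have hF𝒢 : F ∈ 𝒢 :=
    ⟨hFne, hFconv, subset_rfl, hFcomp,
      fun x₀ h₀ x₁ h₁ t _ _ _ => ⟨h₀, h₁⟩, fun x _ z hz _ => hz⟩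
  have hzorn : ∀ c ⊆ 𝒢, IsChain (· ⊆ ·) c → ∃ lb ∈ 𝒢, ∀ s ∈ c, lb ⊆ s := by
    intro c hc hchain
    rcases c.eq_empty_or_nonempty with rfl | hcne
    · exact ⟨F, hF𝒢, by simp⟩
    obtain ⟨G₀, hG₀⟩ := hcne
    have hGprop : ∀ G ∈ c, G ∈ 𝒢 := fun G hG => hc hG
    -- nonempty intersection
    have hne : (⋂₀ c).Nonempty := by
      have : Nonempty c := Set.nonempty_coe_sort.mpr ⟨G₀, hG₀⟩
      have hkey : (⋂ G : c, toWeakSpace ℝ X '' (G : Set X)).Nonempty := by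
        apply IsCompact.nonempty_iInter_of_directed_nonempty_isCompact_isClosed
        · rintro ⟨i, hi⟩ ⟨j, hj⟩
          rcases hchain.total hi hj with h | h
          · exact ⟨⟨i, hi⟩, subset_rfl, image_mono h⟩
          · exact ⟨⟨j, hj⟩, image_mono h, subset_rfl⟩
        · exact fun G => (hGprop G G.2).1.image _
        · exact fun G => (hGprop G G.2).2.2.2.1
        · exact fun G => (hGprop G G.2).2.2.2.1.isClosed
      obtain ⟨w, hw⟩ := hkey
      simp only [mem_iInter] at hw
      refine ⟨(toWeakSpace ℝ X).symm w, ?_⟩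
      intro G hG
      obtain ⟨x, hxG, rfl⟩ := hw ⟨G, hG⟩
      simpa using hxG
    have himage : toWeakSpace ℝ X '' (⋂₀ c) = ⋂ G ∈ c, toWeakSpace ℝ X '' G := by
      apply subset_antisymm
      · intro w hw
        obtain ⟨x, hx, rfl⟩ := hw
        exact mem_biInter fun G hG => mem_image_of_mem _ (hx G hG)
      · intro w hw
        simp only [mem_iInter] at hw
        obtain ⟨x, hxG₀, rfl⟩ := hw G₀ hG₀
        refine ⟨x, ?_, rfl⟩
        intro G hG
        obtain ⟨y, hy, hxy⟩ := hw G hG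
        rwa [← (toWeakSpace ℝ X).injective hxy]
    refine ⟨⋂₀ c, ⟨hne, convex_sInter fun G hG => (hGprop G hG).2.1,
      (sInter_subset_of_mem hG₀).trans (hGprop G₀ hG₀).2.2.1, ?_, ?_, ?_⟩,
      fun s hs => sInter_subset_of_mem hs⟩
    · rw [himage]
      exact IsCompact.of_isClosed_subset (hGprop G₀ hG₀).2.2.2.1
        (isClosed_biInter fun G hG => (hGprop G hG).2.2.2.1.isClosed)
        (biInter_subset_of_mem hG₀)
    · intro x₀ h₀ x₁ h₁ t ht0 ht1 hy
      constructor <;> intro G hG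
      · exact ((hGprop G hG).2.2.2.2.1 x₀ h₀ x₁ h₁ t ht0 ht1 (hy G hG)).1
      · exact ((hGprop G hG).2.2.2.2.1 x₀ h₀ x₁ h₁ t ht0 ht1 (hy G hG)).2
    · intro x hx z hz hxz G hG
      exact (hGprop G hG).2.2.2.2.2 x (hx G hG) z hz hxz
  obtain ⟨G, hGmin⟩ := zorn_superset 𝒢 hzorn
  -- G is a minimal element of 𝒢
  obtain ⟨hGne, hGconv, hGF, hGcomp, hGface, hGup⟩ := hGmin.1
  obtain ⟨p, hpG⟩ := hGne
  have hsingleton : ∀ q ∈ G, q = p := by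
    intro q hq
    by_contra hqp
    -- find a positive functional not constant on G
    obtain ⟨f, hfpos, a, haG, b, hbG, hab⟩ :
        ∃ f : X →L[ℝ] ℝ, (∀ k : X, 0 ≤ k → 0 ≤ f k) ∧
          ∃ a, a ∈ G ∧ ∃ b, b ∈ G ∧ f a < f b := by
      have hor : ¬ q - p ≤ 0 ∨ ¬ p - q ≤ 0 := by
        by_contra h
        push_neg at h
        exact hqp (le_antisymm (sub_nonpos.mp h.1) (sub_nonpos.mp h.2))
      rcases hor with h | h
      · obtain ⟨f, hfpos, hf⟩ := exists_pos_functional _ h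
        rw [map_sub] at hf
        exact ⟨f, hfpos, p, hpG, q, hq, sub_pos.mp hf⟩
      · obtain ⟨f, hfpos, hf⟩ := exists_pos_functional _ h
        rw [map_sub] at hf
        exact ⟨f, hfpos, q, hq, p, hpG, sub_pos.mp hf⟩
    have hfc : Continuous fun w : WeakSpace ℝ X => f ((toWeakSpace ℝ X).symm w) :=
      WeakBilin.eval_continuous (topDualPairing ℝ X).flip f
    obtain ⟨wm, hwm, hwmax⟩ := hGcomp.exists_isMaxOn (⟨_, mem_image_of_mem _ hpG⟩)
      hfc.continuousOn
    obtain ⟨xm, hxmG, rfl⟩ := hwm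
    have hxmax : ∀ y ∈ G, f y ≤ f xm := by
      intro y hy
      have := hwmax (mem_image_of_mem (toWeakSpace ℝ X) hy)
      simpa using this
    set G' : Set X := {x ∈ G | f xm ≤ f x} with hG'
    have hG'𝒢 : G' ∈ 𝒢 := by
      refine ⟨⟨xm, hxmG, le_rfl⟩, ?_, fun x hx => hGF hx.1, ?_, ?_, ?_⟩
      · -- convex
        intro x hx y hy s t hs ht hst
        refine ⟨hGconv hx.1 hy.1 hs ht hst, ?_⟩
        have hx2 := hx.2; have hy2 := hy.2
        have : f (s • x + t • y) = s * f x + t * f y := by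
          rw [map_add, map_smul, map_smul]; simp [smul_eq_mul]
        rw [this]
        have hsx := mul_le_mul_of_nonneg_left hx2 hs
        have hty := mul_le_mul_of_nonneg_left hy2 ht
        have hone : s * f xm + t * f xm = f xm := by rw [← add_mul, hst, one_mul]
        linarith
      · -- compact
        have himg : toWeakSpace ℝ X '' G' =
            (toWeakSpace ℝ X '' G) ∩
              ((fun w : WeakSpace ℝ X => f ((toWeakSpace ℝ X).symm w)) ⁻¹' Ici (f xm)) := by
          ext w
          constructor
          · rintro ⟨x, ⟨hxG, hxf⟩, rfl⟩
            exact ⟨mem_image_of_mem _ hxG, by simpa using hxf⟩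
          · rintro ⟨⟨x, hxG, rfl⟩, hwf⟩
            exact ⟨x, ⟨hxG, by simpa using hwf⟩, rfl⟩
        rw [himg]
        exact hGcomp.inter_right (isClosed_Ici.preimage hfc)
      · -- face
        intro x₀ h₀ x₁ h₁ t ht0 ht1 hy
        obtain ⟨hyG, hyf⟩ := hy
        obtain ⟨hx₀G, hx₁G⟩ := hGface x₀ h₀ x₁ h₁ t ht0 ht1 hyG
        have e₀ := hxmax _ hx₀G
        have e₁ := hxmax _ hx₁G
        have hcomb : f ((1 - t) • x₀ + t • x₁) = (1 - t) * f x₀ + t * f x₁ := by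
          rw [map_add, map_smul, map_smul]; simp [smul_eq_mul]
        rw [hcomb] at hyf
        have ht1' : (0:ℝ) < 1 - t := by linarith
        have k₀ : f xm ≤ f x₀ := by
          have h5 : (1 - t) * f xm ≤ (1 - t) * f x₀ := by
            nlinarith [mul_le_mul_of_nonneg_left e₁ ht0.le]
          exact le_of_mul_le_mul_left h5 ht1'
        have k₁ : f xm ≤ f x₁ := by
          have h5 : t * f xm ≤ t * f x₁ := by
            nlinarith [mul_le_mul_of_nonneg_left e₀ ht1'.le]
          exact le_of_mul_le_mul_left h5 ht0
        exact ⟨⟨hx₀G, k₀⟩, ⟨hx₁G, k₁⟩⟩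
      · -- upward closed
        intro x hx z hz hxz
        refine ⟨hGup x hx.1 z hz hxz, ?_⟩
        have h1 : 0 ≤ f (z - x) := hfpos _ (sub_nonneg.mpr hxz)
        rw [map_sub] at h1
        have := hx.2
        linarith
    have hGG' : G ⊆ G' := hGmin.2 hG'𝒢 fun x hx => hx.1
    have h1 : f xm ≤ f a := (hGG' haG).2
    have h2 : f b ≤ f xm := hxmax b hbG
    linarith
  refine ⟨p, hGF hpG, ?_, ?_⟩
  · intro z hz hpz
    exact hsingleton z (hGup p hpG z hz hpz)
  · intro x₀ h₀ x₁ h₁ t ht0 ht1 hpe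
    have hyG : (1 - t) • x₀ + t • x₁ ∈ G := hpe ▸ hpG
    obtain ⟨h₀G, h₁G⟩ := hGface x₀ h₀ x₁ h₁ t ht0 ht1 hyG
    exact ⟨hsingleton _ h₀G, hsingleton _ h₁G⟩


set_option maxHeartbeats 2000000 in
theorem statement6 (A : Set X) (hne : A.Nonempty) (hconv : Convex ℝ A)
    (hApos : A ⊆ {x : X | 0 ≤ x}) (hsolid : IsPosSolidSet A)
    (hcomp : IsCompact (toWeakSpace ℝ X '' A)) :
    A = closure (⋂₀ {D : Set X | orderExtremePoints A ⊆ D ∧ Convex ℝ D ∧ IsPosSolidSet D}) := by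
  have hsolid' : ∀ ⦃x z : X⦄, 0 ≤ x → z ∈ A → x ≤ z → x ∈ A := hsolid
  classical
  set E' : Set X := {a | a ∈ A ∧ ∀ x₀ ∈ A, ∀ x₁ ∈ A, ∀ t : ℝ, 0 < t → t < 1 →
      a ≤ (1 - t) • x₀ + t • x₁ → x₀ = a ∧ x₁ = a} with hE'
  set B : Set X := ⋂₀ {D : Set X | E' ⊆ D ∧ Convex ℝ D ∧
      (∀ ⦃x z : X⦄, 0 ≤ x → z ∈ D → x ≤ z → x ∈ D)} with hB
  have hAmem : A ∈ {D : Set X | E' ⊆ D ∧ Convex ℝ D ∧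
      (∀ ⦃x z : X⦄, 0 ≤ x → z ∈ D → x ≤ z → x ∈ D)} := ⟨fun x hx => hx.1, hconv, hsolid⟩
  have hBA : B ⊆ A := sInter_subset_of_mem hAmem
  have hEB : E' ⊆ B := fun x hx => mem_sInter.mpr fun D hD => hD.1 hx
  have hBconv : Convex ℝ B := convex_sInter fun D hD => hD.2.1
  have hBsolid : ∀ ⦃x z : X⦄, 0 ≤ x → z ∈ B → x ≤ z → x ∈ B := fun x z hx hz hle =>
    mem_sInter.mpr fun D hD => hD.2.2 hx (mem_sInter.mp hz D hD) hle
  -- A is norm closed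
  have hKclosed : IsClosed (toWeakSpace ℝ X '' A) := hcomp.isClosed
  have hAclosed : IsClosed A := by
    have h1 := hconv.toWeakSpace_closure (𝕜 := ℝ)
    rw [hKclosed.closure_eq] at h1
    have h2 : closure A = A :=
      (Set.image_eq_image (toWeakSpace ℝ X).injective).mp h1
    rw [← h2]; exact isClosed_closure
  have hSA : closure B ⊆ A := closure_minimal hBA hAclosed
  have hSconv : Convex ℝ (closure B) := hBconv.closure
  -- closure B is positive-solid
  have hSsolid : ∀ ⦃x z : X⦄, 0 ≤ x → z ∈ closure B → x ≤ z → x ∈ closure B := by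
    intro x z hx hz hle
    obtain ⟨b, hbB, hbz⟩ := mem_closure_iff_seq_limit.mp hz
    have hmem : ∀ n, x ⊓ b n ∈ B := fun n =>
      hBsolid (le_inf hx (hApos (hBA (hbB n)))) (hbB n) inf_le_right
    have htend : Filter.Tendsto (fun n => x ⊓ b n) Filter.atTop (𝓝 (x ⊓ z)) :=
      Filter.Tendsto.inf_nhds tendsto_const_nhds hbz
    rw [inf_eq_left.mpr hle] at htend
    exact mem_closure_of_tendsto htend (Filter.Eventually.of_forall hmem)
  -- an order extreme point exists
  obtain ⟨p₀, hp₀A, hp₀max, hp₀ext⟩ := exists_extreme_maximal A hne hconv hcomp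
  have hp₀E : p₀ ∈ E' := by
    refine ⟨hp₀A, ?_⟩
    intro x₀ h₀ x₁ h₁ t ht0 ht1 hle
    have hyA : (1 - t) • x₀ + t • x₁ ∈ A := hconv h₀ h₁ (by linarith) ht0.le (by ring)
    exact hp₀ext x₀ h₀ x₁ h₁ t ht0 ht1 (hp₀max _ hyA hle).symm
  -- main inclusion
  refine subset_antisymm ?_ hSA
  intro a haA
  by_contra haS
  -- weak compactness of closure B
  have hSw : toWeakSpace ℝ X '' closure B = closure (toWeakSpace ℝ X '' B) :=
    hBconv.toWeakSpace_closure (𝕜 := ℝ)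
  have hSwclosed : IsClosed (toWeakSpace ℝ X '' closure B) := by
    rw [hSw]; exact isClosed_closure
  have hSwcomp : IsCompact (toWeakSpace ℝ X '' closure B) :=
    IsCompact.of_isClosed_subset hcomp hSwclosed (image_mono hSA)
  -- positive cone weakly closed
  have hPw : IsClosed (toWeakSpace ℝ X '' {x : X | 0 ≤ x}) := by
    have h1 := (convex_Ici (0 : X)).toWeakSpace_closure (𝕜 := ℝ)
    rw [isClosed_Ici.closure_eq] at h1
    have hIci : ({x : X | 0 ≤ x} : Set X) = Ici 0 := rfl
    rw [hIci, h1]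
    exact isClosed_closure
  have hSwconv : Convex ℝ (toWeakSpace ℝ X '' closure B) := by
    have := hSconv.linear_image (toWeakSpace ℝ X : X →ₗ[ℝ] WeakSpace ℝ X)
    simpa using this
  have hPwconv : Convex ℝ (toWeakSpace ℝ X '' {x : X | 0 ≤ x}) := by
    have := (convex_Ici (0 : X)).linear_image (toWeakSpace ℝ X : X →ₗ[ℝ] WeakSpace ℝ X)
    exact this
  have hCclosed : IsClosed (toWeakSpace ℝ X '' closure B + -(toWeakSpace ℝ X '' {x : X | 0 ≤ x})) :=
    IsClosed.add_left_of_isCompact hPw.neg hSwcomp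
  have hCconv : Convex ℝ (toWeakSpace ℝ X '' closure B + -(toWeakSpace ℝ X '' {x : X | 0 ≤ x})) :=
    hSwconv.add hPwconv.neg
  have haC : toWeakSpace ℝ X a ∉
      toWeakSpace ℝ X '' closure B + -(toWeakSpace ℝ X '' {x : X | 0 ≤ x}) := by
    rintro ⟨sw, hsw, nw, hnw, hadd⟩
    obtain ⟨s, hsS, rfl⟩ := hsw
    rw [Set.mem_neg] at hnw
    obtain ⟨k, hk, hknw⟩ := hnw
    have hask : a = s - k := by
      apply (toWeakSpace ℝ X).injective
      rw [map_sub, hknw]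
      rw [← hadd]; abel_nf
    have hasle : a ≤ s := by rw [hask]; exact sub_le_self s hk
    exact haS (hSsolid (hApos haA) hsS hasle)
  obtain ⟨fw, u, hfwC, hfwa⟩ := geometric_hahn_banach_closed_point hCconv hCclosed haC
  set g : X →L[ℝ] ℝ := fw.comp (toWeakSpaceCLM ℝ X) with hg
  have hgdef : ∀ x : X, g x = fw (toWeakSpace ℝ X x) := fun x => rfl
  have hgS : ∀ s ∈ closure B, g s < u := by
    intro s hs
    have h0P : (0 : WeakSpace ℝ X) ∈ -(toWeakSpace ℝ X '' {x : X | 0 ≤ x}) := by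
      rw [Set.mem_neg]
      exact ⟨0, le_refl 0, by simp⟩
    have hmem := add_mem_add (mem_image_of_mem (toWeakSpace ℝ X) hs) h0P
    have := hfwC _ hmem
    rw [add_zero] at this
    exact this
  have hp₀S : p₀ ∈ closure B := subset_closure (hEB hp₀E)
  have hgpos : ∀ k : X, 0 ≤ k → 0 ≤ g k := by
    intro k hk
    by_contra hneg
    push_neg at hneg
    have hgp₀ : g p₀ < u := hgS _ hp₀S
    set t : ℝ := (g p₀ - u - 1) / g k with htdef
    have htpos : 0 < t := div_pos_of_neg_of_neg (by linarith) hneg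
    have hmem : toWeakSpace ℝ X p₀ + -(toWeakSpace ℝ X (t • k)) ∈
        toWeakSpace ℝ X '' closure B + -(toWeakSpace ℝ X '' {x : X | 0 ≤ x}) := by
      refine add_mem_add (mem_image_of_mem _ hp₀S) ?_
      rw [Set.mem_neg, neg_neg]
      exact ⟨t • k, smul_nonneg htpos.le hk, rfl⟩
    have h2 := hfwC _ hmem
    have h3 : fw (toWeakSpace ℝ X (t • k)) = t * g k := by
      rw [← hgdef, map_smul]; simp [smul_eq_mul]
    rw [map_add, map_neg, h3, ← hgdef] at h2
    have h4 : t * g k = g p₀ - u - 1 := div_mul_cancel₀ _ (ne_of_lt hneg)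
    rw [h4] at h2
    linarith
  have hgau : u < g a := hfwa
  -- the face where g attains its maximum on A
  obtain ⟨wm, hwm, hwmax⟩ := hcomp.exists_isMaxOn (hne.image _) fw.continuous.continuousOn
  obtain ⟨xm, hxmA, rfl⟩ := hwm
  have hxmax : ∀ y ∈ A, g y ≤ g xm := fun y hy => hwmax (mem_image_of_mem _ hy)
  set F : Set X := {x ∈ A | g xm ≤ g x} with hF
  have hFne : F.Nonempty := ⟨xm, hxmA, le_rfl⟩
  have hFconv : Convex ℝ F := by
    intro x hx y hy s t hs ht hst
    refine ⟨hconv hx.1 hy.1 hs ht hst, ?_⟩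
    have hx2 := hx.2; have hy2 := hy.2
    have hval : g (s • x + t • y) = s * g x + t * g y := by
      rw [map_add, map_smul, map_smul]; simp [smul_eq_mul]
    rw [hval]
    have hsx := mul_le_mul_of_nonneg_left hx2 hs
    have hty := mul_le_mul_of_nonneg_left hy2 ht
    have hone : s * g xm + t * g xm = g xm := by rw [← add_mul, hst, one_mul]
    linarith
  have hFcomp : IsCompact (toWeakSpace ℝ X '' F) := by
    have himg : toWeakSpace ℝ X '' F = (toWeakSpace ℝ X '' A) ∩ (fw ⁻¹' Ici (g xm)) := by
      ext w
      constructor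
      · rintro ⟨x, ⟨hxA, hxf⟩, rfl⟩
        exact ⟨mem_image_of_mem _ hxA, hxf⟩
      · rintro ⟨⟨x, hxA, rfl⟩, hwf⟩
        exact ⟨x, ⟨hxA, hwf⟩, rfl⟩
    rw [himg]
    exact hcomp.inter_right (isClosed_Ici.preimage fw.continuous)
  obtain ⟨p, hpF, hpmax, hpext⟩ := exists_extreme_maximal F hFne hFconv hFcomp
  have hpA : p ∈ A := hpF.1
  have hpmaxA : ∀ z ∈ A, p ≤ z → z = p := by
    intro z hz hpz
    have h1 : 0 ≤ g (z - p) := hgpos _ (sub_nonneg.mpr hpz)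
    rw [map_sub] at h1
    have hgz : g xm ≤ g z := by have := hpF.2; linarith
    exact hpmax z ⟨hz, hgz⟩ hpz
  have hpE : p ∈ E' := by
    refine ⟨hpA, ?_⟩
    intro x₀ h₀ x₁ h₁ t ht0 ht1 hle
    have hyA : (1 - t) • x₀ + t • x₁ ∈ A := hconv h₀ h₁ (by linarith) ht0.le (by ring)
    have heq : (1 - t) • x₀ + t • x₁ = p := hpmaxA _ hyA hle
    have hcombv : g ((1 - t) • x₀ + t • x₁) = (1 - t) * g x₀ + t * g x₁ := by
      rw [map_add, map_smul, map_smul]; simp [smul_eq_mul]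
    have hgy : g xm ≤ (1 - t) * g x₀ + t * g x₁ := by
      rw [← hcombv, heq]; exact hpF.2
    have e₀ := hxmax _ h₀
    have e₁ := hxmax _ h₁
    have ht1' : (0 : ℝ) < 1 - t := by linarith
    have k₀ : g xm ≤ g x₀ := by
      have h5 : (1 - t) * g xm ≤ (1 - t) * g x₀ := by
        nlinarith [mul_le_mul_of_nonneg_left e₁ ht0.le]
      exact le_of_mul_le_mul_left h5 ht1'
    have k₁ : g xm ≤ g x₁ := by
      have h5 : t * g xm ≤ t * g x₁ := by
        nlinarith [mul_le_mul_of_nonneg_left e₀ ht1'.le]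
      exact le_of_mul_le_mul_left h5 ht0
    exact hpext x₀ ⟨h₀, k₀⟩ x₁ ⟨h₁, k₁⟩ t ht0 ht1 heq.symm
  have hcontra1 : g p < u := hgS p (subset_closure (hEB hpE))
  have hcontra2 : g xm ≤ g p := hpF.2
  have hcontra3 : g a ≤ g xm := hxmax a haA
  linarith
end

section
/- Let X be a Banach lattice and C ⊆ X₊ a set that is compact in the weak topology. Then the solid hull so(C) is closed in the weak topology. -/
open Set Metric Filter Topology

variable {X : Type*} [NormedAddCommGroup X] [Lattice X] [IsOrderedAddMonoid X] [HasSolidNorm X] [NormedSpace ℝ X] [PosSMulStrictMono ℝ X]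
  [CompleteSpace X]

theorem statement11 (C : Set X) (hCpos : C ⊆ {x : X | 0 ≤ x})
    (hcomp : IsCompact (toWeakSpace ℝ X '' C)) :
    IsClosed (toWeakSpace ℝ X '' solidHull C) := by
  classical
  set e := toWeakSpace ℝ X with he
  -- the positive cone is weakly closed
  have hPconv : Convex ℝ {x : X | 0 ≤ x} := fun x hx y hy a b ha hb _ =>
    add_nonneg (smul_nonneg ha hx) (smul_nonneg hb hy)
  have hPclosed : IsClosed (e '' {x : X | 0 ≤ x}) := by
    have := hPconv.toWeakSpace_closure (𝕜 := ℝ)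
    rw [isClosed_nonneg.closure_eq] at this
    rw [he, this]
    exact isClosed_closure
  -- a witness function: for `s` in the image of the solid hull,
  -- pick `x ∈ C` with `|e.symm s| ≤ x`
  have hwit : ∀ s : WeakSpace ℝ X, ∃ x : X,
      e.symm s ∈ solidHull C → x ∈ C ∧ |e.symm s| ≤ |x| := by
    intro s
    by_cases h : e.symm s ∈ solidHull C
    · obtain ⟨x, hx, hle⟩ := h
      exact ⟨x, fun _ => ⟨hx, hle⟩⟩
    · exact ⟨0, fun h' => absurd h' h⟩
  choose w hw using hwit
  rw [isClosed_iff_clusterPt]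
  intro z hz
  have hFne : Filter.NeBot (𝓝 z ⊓ Filter.principal (e '' solidHull C)) := hz
  obtain ⟨F, hF⟩ := Filter.exists_ultrafilter_le (𝓝 z ⊓ Filter.principal (e '' solidHull C))
  have hFz : (F : Filter (WeakSpace ℝ X)) ≤ 𝓝 z := hF.trans inf_le_left
  have hFS : e '' solidHull C ∈ F := hF.trans inf_le_right (Filter.mem_principal_self _)
  -- along `F`, eventually `e.symm s ∈ solidHull C`
  have hmem : ∀ᶠ s in (F : Filter (WeakSpace ℝ X)), e.symm s ∈ solidHull C := by
    filter_upwards [hFS] with s hs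
    obtain ⟨y, hy, rfl⟩ := hs
    simpa using hy
  -- the witness-image ultrafilter lies on the compact set `e '' C`
  have hKmem : e '' C ∈ F.map (fun s => e (w s)) :=
    Filter.mem_map.2 (hmem.mono fun s hs => ⟨w s, (hw s hs).1, rfl⟩)
  obtain ⟨x, hxK, hxlim⟩ := hcomp.ultrafilter_le_nhds (F.map (fun s => e (w s)))
    (Filter.le_principal_iff.2 hKmem)
  obtain ⟨x', hx'C, rfl⟩ := hxK
  -- limits of `e (w s) - s` and `e (w s) + s`
  have htw : Filter.Tendsto (fun s => e (w s)) F (𝓝 (e x')) := hxlim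
  have htid : Filter.Tendsto (fun s : WeakSpace ℝ X => s) F (𝓝 z) := hFz
  have htsub : Filter.Tendsto (fun s => e (w s) - s) F (𝓝 (e x' - z)) := htw.sub htid
  have htadd : Filter.Tendsto (fun s => e (w s) + s) F (𝓝 (e x' + z)) := htw.add htid
  have habs : ∀ᶠ s in (F : Filter (WeakSpace ℝ X)),
      (e (w s) - s ∈ e '' {x : X | 0 ≤ x}) ∧ (e (w s) + s ∈ e '' {x : X | 0 ≤ x}) := by
    filter_upwards [hmem] with s hs
    obtain ⟨hwC, hwle⟩ := hw s hs
    have hwpos : (0 : X) ≤ w s := hCpos hwC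
    rw [abs_of_nonneg hwpos] at hwle
    have h1 : (0 : X) ≤ w s - e.symm s := sub_nonneg.2 ((le_abs_self _).trans hwle)
    have h2 : (0 : X) ≤ w s + e.symm s := by
      rw [← sub_neg_eq_add]
      exact sub_nonneg.2 ((neg_le_abs _).trans hwle)
    constructor
    · refine ⟨w s - e.symm s, h1, ?_⟩
      simp [map_sub]
    · refine ⟨w s + e.symm s, h2, ?_⟩
      simp [map_add]
  have h1 : e x' - z ∈ e '' {x : X | 0 ≤ x} :=
    hPclosed.mem_of_tendsto htsub (habs.mono fun s hs => hs.1)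
  have h2 : e x' + z ∈ e '' {x : X | 0 ≤ x} :=
    hPclosed.mem_of_tendsto htadd (habs.mono fun s hs => hs.2)
  -- conclude
  obtain ⟨a, ha, hae⟩ := h1
  obtain ⟨b, hb, hbe⟩ := h2
  set z' := e.symm z with hz'
  have hza : a = x' - z' := by
    apply e.injective
    rw [hae, map_sub, hz', LinearEquiv.apply_symm_apply]
  have hzb : b = x' + z' := by
    apply e.injective
    rw [hbe, map_add, hz', LinearEquiv.apply_symm_apply]
  have h1' : z' ≤ x' := by rw [hza] at ha; exact sub_nonneg.1 (by simpa using ha)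
  have h2' : -z' ≤ x' := by
    rw [hzb] at hb
    simp only [mem_setOf_eq] at hb
    exact neg_le_iff_add_nonneg.2 hb
  refine ⟨z', ⟨x', hx'C, ?_⟩, by simp [hz']⟩
  rw [abs_of_nonneg (hCpos hx'C)]
  exact abs_le'.2 ⟨h1', h2'⟩
end

section
/- Let X be a Banach lattice and C ⊆ X a set that is relatively compact in the norm topology (i.e., its norm closure is compact). Then the norm closure of the solid hull of C equals the solid hull of the norm closure of C: cl(so(C)) = so(cl(C)). -/
open Set Metric

variable {X : Type*} [NormedAddCommGroup X] [Lattice X] [HasSolidNorm X] [IsOrderedAddMonoid X]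
  [NormedSpace ℝ X] [PosSMulStrictMono ℝ X]
  [CompleteSpace X]

theorem statement12 (C : Set X) (hcomp : IsCompact (closure C)) :
    closure (solidHull C) = solidHull (closure C) := by
  have cabs : Continuous fun y : X => |y| := by
    have h : Continuous fun y : X => y ⊔ -y := continuous_id.sup continuous_neg
    exact h
  apply Set.Subset.antisymm
  · -- closure (solidHull C) ⊆ solidHull (closure C), since the RHS is closed
    have h1 : solidHull C ⊆ solidHull (closure C) := by
      rintro z ⟨x, hx, hz⟩; exact ⟨x, subset_closure hx, hz⟩
    have h2 : IsClosed (solidHull (closure C)) := by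
      rw [← isSeqClosed_iff_isClosed]
      intro zn z hzn hz
      choose xn hxn hle using hzn
      obtain ⟨x, hxK, φ, hφ, hconv⟩ := hcomp.tendsto_subseq hxn
      refine ⟨x, hxK, ?_⟩
      have t1 : Filter.Tendsto (fun n => |zn (φ n)|) Filter.atTop (nhds |z|) :=
        (cabs.tendsto z).comp (hz.comp hφ.tendsto_atTop)
      have t2 : Filter.Tendsto (fun n => |xn (φ n)|) Filter.atTop (nhds |x|) :=
        (cabs.tendsto x).comp hconv
      exact le_of_tendsto_of_tendsto' t1 t2 fun n => hle (φ n)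
    exact closure_minimal h1 h2
  · rintro z ⟨x, hx, hz⟩
    rw [mem_closure_iff_seq_limit] at hx ⊢
    obtain ⟨xn, hxn, hconv⟩ := hx
    have cf : Continuous fun y : X => (z ⊔ (-|y|)) ⊓ |y| :=
      ((continuous_const.sup cabs.neg).inf cabs)
    refine ⟨fun n => (z ⊔ (-|xn n|)) ⊓ |xn n|, fun n => ⟨xn n, hxn n, ?_⟩, ?_⟩
    · have ha : -|xn n| ≤ (z ⊔ (-|xn n|)) ⊓ |xn n| :=
        le_inf le_sup_right ((neg_nonpos.mpr (abs_nonneg _)).trans (abs_nonneg _))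
      have hb : (z ⊔ (-|xn n|)) ⊓ |xn n| ≤ |xn n| := inf_le_right
      exact abs_le'.mpr ⟨hb, neg_le.mp ha⟩
    · have key : (z ⊔ (-|x|)) ⊓ |x| = z := by
        have h1 : -|x| ≤ z := neg_le.mp (le_trans (neg_le_abs z) hz) |>.trans_eq rfl
        have h2 : z ≤ |x| := (le_abs_self z).trans hz
        rw [sup_eq_left.mpr h1, inf_eq_left.mpr h2]
      have := (cf.tendsto x).comp hconv
      rwa [key] at this
end

section
/- Let X be a separable AM-space such that every positive continuous linear functional on X attains its norm on the closed unit ball of X. Then X is lattice isometric to C(K, ℝ) for some compact Hausdorff topological space K. -/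
open Set Metric

variable {X : Type*} [NormedAddCommGroup X] [Lattice X] [IsOrderedAddMonoid X] [HasSolidNorm X]
  [NormedSpace ℝ X] [PosSMulStrictMono ℝ X] [PosSMulReflectLT ℝ X]
  [CompleteSpace X]

set_option linter.unusedSectionVars false
set_option maxHeartbeats 1000000

namespace st15

noncomputable section

/-! ### Basic lattice helpers -/

lemma norm_mono {a b : X} (ha : 0 ≤ a) (hab : a ≤ b) : ‖a‖ ≤ ‖b‖ :=
  HasSolidNorm.solid (by rwa [abs_of_nonneg ha, abs_of_nonneg (ha.trans hab)])

lemma smul_sup' {c : ℝ} (hc : 0 < c) (v w : X) : c • (v ⊔ w) = c • v ⊔ c • w :=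
  (OrderIso.smulRight hc).map_sup v w

lemma smul_inf' {c : ℝ} (hc : 0 < c) (v w : X) : c • (v ⊓ w) = c • v ⊓ c • w :=
  (OrderIso.smulRight hc).map_inf v w

lemma smul_posPart {c : ℝ} (hc : 0 < c) (z : X) : (c • z)⁺ = c • z⁺ := by
  rw [posPart_def, posPart_def, smul_sup' hc, smul_zero]

lemma smul_negPart {c : ℝ} (hc : 0 < c) (z : X) : (c • z)⁻ = c • z⁻ := by
  rw [← posPart_neg, ← smul_neg, smul_posPart hc, posPart_neg]

lemma posPart_add_le' (a b : X) : (a + b)⁺ ≤ a⁺ + b⁺ := by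
  rw [posPart_def]
  exact sup_le (add_le_add (le_posPart a) (le_posPart b))
    (add_nonneg (posPart_nonneg a) (posPart_nonneg b))

lemma posPart_le_abs' (a : X) : a⁺ ≤ |a| := by
  rw [posPart_def]; exact sup_le (le_abs_self a) (abs_nonneg a)

lemma norm_posPart_le (a : X) : ‖a⁺‖ ≤ ‖a‖ := by
  calc ‖a⁺‖ ≤ ‖|a|‖ := norm_mono (posPart_nonneg a) (posPart_le_abs' a)
  _ = ‖a‖ := norm_abs_eq_norm a

lemma norm_negPart_le (a : X) : ‖a⁻‖ ≤ ‖a‖ := by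
  rw [← posPart_neg, ← norm_neg a]; exact norm_posPart_le (-a)

lemma smul_mono_scalar {r s : ℝ} {z : X} (h : r ≤ s) (hz : 0 ≤ z) : r • z ≤ s • z := by
  have h1 : 0 ≤ (s - r) • z := smul_nonneg (sub_nonneg.2 h) hz
  rw [sub_smul] at h1
  exact sub_nonneg.1 h1

lemma smul_mono_vec {c : ℝ} {a b : X} (hc : 0 ≤ c) (h : a ≤ b) : c • a ≤ c • b := by
  have h1 : 0 ≤ c • (b - a) := smul_nonneg hc (sub_nonneg.2 h)
  rw [smul_sub] at h1
  exact sub_nonneg.1 h1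

lemma abs_smul_of_nonneg {c : ℝ} (hc : 0 ≤ c) (z : X) : |c • z| = c • |z| := by
  rcases hc.lt_or_eq with h | h
  · have h1 : |c • z| = (c • z) ⊔ (-(c • z)) := rfl
    have h2 : |z| = z ⊔ (-z) := rfl
    rw [h1, h2, smul_sup' h, smul_neg]
  · rw [← h]; simp

/-- The key Riesz-space inequality: `(z + w) ⊓ v ≤ z ⊓ v + w ⊓ v` for nonnegative elements. -/
lemma inf_add_le_of_nonneg {z w v : X} (hz : 0 ≤ z) (hw : 0 ≤ w) (hv : 0 ≤ v) :
    (z + w) ⊓ v ≤ z ⊓ v + w ⊓ v := by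
  have h1 : z ⊓ v + w ⊓ v = (z + w ⊓ v) ⊓ (v + w ⊓ v) := inf_add z v (w ⊓ v)
  have h2 : z + w ⊓ v = (z + w) ⊓ (z + v) := add_inf w v z
  have h3 : v + w ⊓ v = (v + w) ⊓ (v + v) := add_inf w v v
  rw [h1, h2, h3]
  refine le_inf (le_inf inf_le_left ?_) (le_inf ?_ ?_)
  · exact inf_le_right.trans (le_add_of_nonneg_left hz)
  · exact inf_le_right.trans (le_add_of_nonneg_right hw)
  · exact inf_le_right.trans (le_add_of_nonneg_right hv)

lemma inf_add_inf_le {z w a b : X} : z ⊓ a + w ⊓ b ≤ (z + w) ⊓ (a + b) :=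
  le_inf (add_le_add inf_le_left inf_le_left) (add_le_add inf_le_right inf_le_right)

/-! ### Lemma A : positive norming functionals -/

set_option maxHeartbeats 1000000 in
lemma exists_norming (y : X) (hy : 0 ≤ y) :
    ∃ f : X →L[ℝ] ℝ, (∀ z, 0 ≤ z → 0 ≤ f z) ∧ ‖f‖ ≤ 1 ∧ f y = ‖y‖ := by
  rcases eq_or_ne y 0 with rfl | hy0
  · exact ⟨0, fun z _ => le_refl 0, by simp, by simp⟩
  have H : ∀ c : ℝ, c • y = 0 → c • ‖y‖ = 0 := by
    intro c hc
    rcases smul_eq_zero.1 hc with rfl | h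
    · simp
    · exact absurd h hy0
  set p : X →ₗ.[ℝ] ℝ := LinearPMap.mkSpanSingleton' y ‖y‖ H with hp
  have hdom : ∀ x : p.domain, p x ≤ ‖((x : X))⁺‖ := by
    rintro ⟨x, hx⟩
    have hx' := hx
    rw [hp, LinearPMap.domain_mkSpanSingleton] at hx'
    rcases Submodule.mem_span_singleton.1 hx' with ⟨c, rfl⟩
    have happ : p ⟨c • y, hx⟩ = c • ‖y‖ := LinearPMap.mkSpanSingleton'_apply y ‖y‖ H c hx
    rw [happ]
    rcases le_or_gt 0 c with hc | hc
    · have h1 : (c • y)⁺ = c • y := posPart_eq_self.2 (smul_nonneg hc hy)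
      rw [h1, norm_smul, Real.norm_of_nonneg hc]
      exact le_refl _
    · have h1 : (c • y)⁺ = 0 := posPart_eq_zero.2 (smul_nonpos_of_nonpos_of_nonneg hc.le hy)
      rw [h1, norm_zero, smul_eq_mul]
      exact mul_nonpos_of_nonpos_of_nonneg hc.le (norm_nonneg y)
  obtain ⟨g, hg1, hg2⟩ := exists_extension_of_le_sublinear p (fun x => ‖x⁺‖)
    (fun c hc x => by
      show ‖(c • x)⁺‖ = c * ‖x⁺‖
      rw [smul_posPart hc, norm_smul, Real.norm_of_nonneg hc.le])
    (fun x y => le_trans (norm_mono (posPart_nonneg _) (posPart_add_le' x y)) (norm_add_le _ _))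
    hdom
  have hbound : ∀ z : X, |g z| ≤ 1 * ‖z‖ := by
    intro z
    rw [one_mul, abs_le]
    constructor
    · have h1 := hg2 (-z)
      rw [map_neg] at h1
      have h2 : ‖(-z)⁺‖ ≤ ‖z‖ := by
        rw [← norm_neg z]; exact norm_posPart_le (-z)
      linarith
    · exact (hg2 z).trans (norm_posPart_le z)
  refine ⟨g.mkContinuous 1 hbound, ?_, ?_, ?_⟩
  · intro z hz
    have h1 := hg2 (-z)
    rw [map_neg] at h1
    have h0 : (-z)⁺ = 0 := posPart_eq_zero.2 (neg_nonpos.2 hz)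
    simp only [LinearMap.mkContinuous_apply]
    rw [h0, norm_zero] at h1
    linarith
  · exact g.mkContinuous_norm_le zero_le_one hbound
  · have hy' : y ∈ p.domain := by
      rw [hp, LinearPMap.domain_mkSpanSingleton]
      exact Submodule.mem_span_singleton_self y
    have h1 := hg1 ⟨y, hy'⟩
    have h2 : p ⟨y, hy'⟩ = ‖y‖ := LinearPMap.mkSpanSingleton'_apply_self y ‖y‖ H hy'
    simp only [LinearMap.mkContinuous_apply]
    rw [h1, h2]

/-! ### Lemma B : strictly positive functional -/

lemma exists_strictly_positive [TopologicalSpace.SeparableSpace X] :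
    ∃ f : X →L[ℝ] ℝ, (∀ z, 0 ≤ z → 0 ≤ f z) ∧ (∀ z, 0 < z → 0 < f z) ∧ ‖f‖ ≤ 1 := by
  have : Nonempty X := ⟨0⟩
  set u : ℕ → X := TopologicalSpace.denseSeq X with hu
  have hdense : DenseRange u := TopologicalSpace.denseRange_denseSeq X
  choose f hfpos hfnorm hfval using fun n => exists_norming |u n| (abs_nonneg _)
  set F : ℕ → (X →L[ℝ] ℝ) := fun n => ((1/2 : ℝ)^(n+1)) • f n with hF
  have hFnorm : ∀ n, ‖F n‖ ≤ (1/2 : ℝ)^(n+1) := by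
    intro n
    have h0 : ‖F n‖ ≤ ‖((1/2:ℝ)^(n+1))‖ * ‖f n‖ := ContinuousLinearMap.opNorm_smul_le _ _
    rw [Real.norm_of_nonneg (by positivity : (0:ℝ) ≤ (1/2:ℝ)^(n+1))] at h0
    have h1 : (1/2:ℝ)^(n+1) * ‖f n‖ ≤ (1/2 : ℝ)^(n+1) * 1 :=
      mul_le_mul_of_nonneg_left (hfnorm n) (by positivity)
    rw [mul_one] at h1
    exact h0.trans h1
  have hgs : Summable (fun n : ℕ => (1/2 : ℝ)^(n+1)) := by
    apply Summable.comp_injective summable_geometric_two (add_left_injective 1)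
  have hFs : Summable F := Summable.of_norm_bounded hgs hFnorm
  set f₀ : X →L[ℝ] ℝ := ∑' n, F n with hf₀
  have happ : ∀ z : X, HasSum (fun n => F n z) (f₀ z) := fun z =>
    hFs.hasSum.mapL (ContinuousLinearMap.apply ℝ ℝ z)
  have happos : ∀ z : X, 0 ≤ z → ∀ n, 0 ≤ F n z := by
    intro z hz n
    have h1 := hfpos n z hz
    show 0 ≤ ((1/2 : ℝ)^(n+1)) • (f n) z
    rw [smul_eq_mul]
    positivity
  refine ⟨f₀, ?_, ?_, ?_⟩
  · intro z hz
    exact hasSum_le (fun n => happos z hz n) hasSum_zero (happ z)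
  · intro z hz
    have hz0 : 0 ≤ z := hz.le
    have hzn : 0 < ‖z‖ := by rw [norm_pos_iff]; exact hz.ne'
    obtain ⟨n, hn⟩ : ∃ n, dist z (u n) < ‖z‖/2 :=
      (Metric.denseRange_iff).1 hdense z (‖z‖/2) (by linarith)
    have h1 : ‖|u n| - z‖ ≤ ‖u n - z‖ := by
      have h := abs_abs_sub_abs_le (u n) z
      rw [abs_of_nonneg hz0] at h
      exact HasSolidNorm.solid h
    have h2 : ‖u n - z‖ < ‖z‖/2 := by
      rw [← dist_eq_norm, dist_comm]; exact hn
    have h3 : (‖z‖:ℝ)/2 < ‖|u n|‖ := by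
      rw [norm_abs_eq_norm]
      have h := norm_sub_norm_le z (u n)
      rw [← dist_eq_norm] at h
      linarith
    have h4 : 0 < f n z := by
      have hv := hfval n
      have he : f n z = f n |u n| - f n (|u n| - z) := by rw [map_sub]; ring
      rw [he, hv]
      have hb : f n (|u n| - z) ≤ ‖|u n| - z‖ := by
        calc f n (|u n| - z) ≤ |f n (|u n| - z)| := le_abs_self _
          _ ≤ ‖f n‖ * ‖|u n| - z‖ := by
              rw [← Real.norm_eq_abs]; exact (f n).le_opNorm _
          _ ≤ 1 * ‖|u n| - z‖ :=
              mul_le_mul_of_nonneg_right (hfnorm n) (norm_nonneg _)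
          _ = ‖|u n| - z‖ := one_mul _
      have h5 := h1.trans_lt h2
      linarith
    have h5 : 0 < F n z := by
      show 0 < ((1/2 : ℝ)^(n+1)) • (f n) z
      rw [smul_eq_mul]
      positivity
    have h6 : F n z ≤ f₀ z := by
      have h7 := Summable.le_tsum (happ z).summable n (fun m _ => happos z hz0 m)
      rwa [(happ z).tsum_eq] at h7
    linarith
  · calc ‖f₀‖ ≤ ∑' n, ‖F n‖ :=
        norm_tsum_le_tsum_norm (hgs.of_nonneg_of_le (fun n => norm_nonneg _) hFnorm)
    _ ≤ ∑' n, (1/2 : ℝ)^(n+1) :=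
        Summable.tsum_le_tsum hFnorm (hgs.of_nonneg_of_le (fun n => norm_nonneg _) hFnorm) hgs
    _ = 1 := by
        have h : ∀ n : ℕ, (1/2 : ℝ)^(n+1) = 1/2/2^n := by
          intro n; rw [pow_succ, div_pow, one_pow]; ring
        rw [tsum_congr h, tsum_geometric_two' 1]

/-! ### Lemma C : strong unit -/

lemma exists_unit [Nontrivial X] [TopologicalSpace.SeparableSpace X]
    (hAM : ∀ x y : X, 0 ≤ x → 0 ≤ y → ‖x ⊔ y‖ = max ‖x‖ ‖y‖)
    (hatt : ∀ f : X →L[ℝ] ℝ, (∀ x : X, 0 ≤ x → 0 ≤ f x) →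
      ∃ x ∈ Metric.closedBall (0 : X) 1, f x = ‖f‖) :
    ∃ e : X, 0 ≤ e ∧ ‖e‖ = 1 ∧ ∀ y : X, ‖y‖ ≤ 1 → |y| ≤ e := by
  obtain ⟨f₀, hpos, hstrict, hnorm⟩ := exists_strictly_positive (X := X)
  have hmono : ∀ {a b : X}, a ≤ b → f₀ a ≤ f₀ b := by
    intro a b hab
    have h1 := hpos (b - a) (sub_nonneg.2 hab)
    rw [map_sub] at h1
    linarith
  obtain ⟨x, hx, hfx⟩ := hatt f₀ hpos
  rw [Metric.mem_closedBall, dist_zero_right] at hx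
  have hf₀pos : 0 < ‖f₀‖ := by
    obtain ⟨z, hz⟩ := exists_ne (0 : X)
    have h1 : 0 < |z| := by
      rcases (abs_nonneg z).lt_or_eq with h | h
      · exact h
      · exfalso
        apply hz
        have h2 : z ≤ |z| := le_abs_self z
        have h3 : -z ≤ |z| := neg_le_abs z
        rw [← h] at h2 h3
        exact le_antisymm h2 (neg_nonpos.1 h3)
    have h2 := hstrict |z| h1
    have h3 : f₀ |z| ≤ ‖f₀‖ * ‖(|z| : X)‖ := by
      have hb := f₀.le_opNorm (|z| : X)
      rw [Real.norm_eq_abs] at hb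
      exact (le_abs_self _).trans hb
    nlinarith [norm_nonneg |z|]
  set e := x⁺ with he
  have he0 : 0 ≤ e := posPart_nonneg x
  have hee : ‖e‖ ≤ 1 := (norm_posPart_le x).trans hx
  have hfe : f₀ e = ‖f₀‖ := by
    have h1 : f₀ x ≤ f₀ e := hmono (le_posPart x)
    have h2 : f₀ e ≤ ‖f₀‖ * ‖e‖ := by
      calc f₀ e ≤ |f₀ e| := le_abs_self _
        _ ≤ ‖f₀‖ * ‖e‖ := by rw [← Real.norm_eq_abs]; exact f₀.le_opNorm _
    nlinarith
  have hdomin : ∀ y : X, ‖y‖ ≤ 1 → |y| ≤ e := by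
    intro y hy
    set w := |y| with hw
    have hw0 : 0 ≤ w := abs_nonneg y
    have hwn : ‖w‖ ≤ 1 := by rw [hw, norm_abs_eq_norm]; exact hy
    have hs : ‖e ⊔ w‖ ≤ 1 := by
      rw [hAM e w he0 hw0]
      exact max_le hee hwn
    have h1 : f₀ (e ⊔ w) ≤ ‖f₀‖ := by
      calc f₀ (e ⊔ w) ≤ |f₀ (e ⊔ w)| := le_abs_self _
        _ ≤ ‖f₀‖ * ‖e ⊔ w‖ := by rw [← Real.norm_eq_abs]; exact f₀.le_opNorm _
        _ ≤ ‖f₀‖ * 1 := mul_le_mul_of_nonneg_left hs hf₀pos.le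
        _ = ‖f₀‖ := mul_one _
    have h2 : f₀ e ≤ f₀ (e ⊔ w) := hmono le_sup_left
    have h3 : f₀ (e ⊔ w - e) = 0 := by
      rw [map_sub]
      linarith [hfe]
    have h4 : 0 ≤ e ⊔ w - e := sub_nonneg.2 le_sup_left
    have h5 : e ⊔ w - e = 0 := by
      by_contra hne
      have : 0 < e ⊔ w - e := h4.lt_of_ne (Ne.symm hne)
      have := hstrict _ this
      linarith
    have h6 : e ⊔ w = e := by
      have := sub_eq_zero.1 h5
      exact this
    calc |y| = w := rfl
      _ ≤ e ⊔ w := le_sup_right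
      _ = e := h6
  have he1 : ‖e‖ = 1 := by
    obtain ⟨y, hy⟩ := exists_norm_eq X (zero_le_one (α := ℝ))
    have h1 : |y| ≤ e := hdomin y hy.le
    have h2 : ‖|y|‖ ≤ ‖e‖ := norm_mono (abs_nonneg y) h1
    rw [norm_abs_eq_norm, hy] at h2
    exact le_antisymm hee h2
  exact ⟨e, he0, he1, hdomin⟩

/-! ### The component functional `Gc` -/

variable (f : X →L[ℝ] ℝ) (x : X)

def Gc (z : X) : ℝ := ⨆ n : ℕ, f (z ⊓ (n : ℝ) • x)

variable {f x}

lemma fmono (hf : ∀ z, 0 ≤ z → 0 ≤ f z) {a b : X} (h : a ≤ b) : f a ≤ f b := by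
  have h1 := hf (b - a) (sub_nonneg.2 h)
  rw [map_sub] at h1
  linarith

lemma Gc_bdd (hf : ∀ z, 0 ≤ z → 0 ≤ f z) (z : X) : BddAbove (Set.range fun n : ℕ => f (z ⊓ (n : ℝ) • x)) := by
  refine ⟨f z, ?_⟩
  rintro _ ⟨n, rfl⟩
  exact fmono hf inf_le_left

lemma Gc_le (hf : ∀ z, 0 ≤ z → 0 ≤ f z) (z : X) : Gc f x z ≤ f z :=
  ciSup_le fun n => fmono hf inf_le_left

lemma Gc_nonneg (hf : ∀ z, 0 ≤ z → 0 ≤ f z) {z : X} (hz : 0 ≤ z) : 0 ≤ Gc f x z := by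
  have h1 : f (z ⊓ ((0 : ℕ) : ℝ) • x) = 0 := by
    rw [Nat.cast_zero, zero_smul, inf_eq_right.2 hz, map_zero]
  calc (0 : ℝ) = f (z ⊓ ((0 : ℕ) : ℝ) • x) := h1.symm
    _ ≤ Gc f x z := le_ciSup (Gc_bdd hf z) 0

lemma Gc_mono (hf : ∀ z, 0 ≤ z → 0 ≤ f z) {z w : X} (h : z ≤ w) : Gc f x z ≤ Gc f x w :=
  ciSup_le fun n => (fmono hf (inf_le_inf_right _ h)).trans (le_ciSup (Gc_bdd hf w) n)

lemma Gc_add (hf : ∀ z, 0 ≤ z → 0 ≤ f z) (hx : 0 ≤ x) {z w : X} (hz : 0 ≤ z) (hw : 0 ≤ w) :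
    Gc f x (z + w) = Gc f x z + Gc f x w := by
  have hnx : ∀ n : ℕ, (0 : X) ≤ (n : ℝ) • x := fun n => smul_nonneg (Nat.cast_nonneg n) hx
  refine le_antisymm ?_ ?_
  · refine ciSup_le fun n => ?_
    calc f ((z + w) ⊓ (n : ℝ) • x)
        ≤ f (z ⊓ (n : ℝ) • x + w ⊓ (n : ℝ) • x) :=
          fmono hf (inf_add_le_of_nonneg hz hw (hnx n))
      _ = f (z ⊓ (n : ℝ) • x) + f (w ⊓ (n : ℝ) • x) := map_add f _ _
      _ ≤ Gc f x z + Gc f x w :=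
          add_le_add (le_ciSup (Gc_bdd hf z) n) (le_ciSup (Gc_bdd hf w) n)
  · have hnm : ∀ n m : ℕ, f (z ⊓ (n : ℝ) • x) + f (w ⊓ (m : ℝ) • x) ≤ Gc f x (z + w) := by
      intro n m
      have hle : z ⊓ (n : ℝ) • x + w ⊓ (m : ℝ) • x ≤ (z + w) ⊓ ((n + m : ℕ) : ℝ) • x := by
        have h1 : ((n + m : ℕ) : ℝ) • x = (n : ℝ) • x + (m : ℝ) • x := by
          rw [Nat.cast_add, add_smul]
        rw [h1]
        exact inf_add_inf_le
      calc f (z ⊓ (n : ℝ) • x) + f (w ⊓ (m : ℝ) • x)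
          = f (z ⊓ (n : ℝ) • x + w ⊓ (m : ℝ) • x) := (map_add f _ _).symm
        _ ≤ f ((z + w) ⊓ ((n + m : ℕ) : ℝ) • x) := fmono hf hle
        _ ≤ Gc f x (z + w) := le_ciSup (Gc_bdd hf (z + w)) (n + m)
    have h4 : ∀ n : ℕ, Gc f x w ≤ Gc f x (z + w) - f (z ⊓ (n : ℝ) • x) := fun n =>
      ciSup_le fun m => by linarith [hnm n m]
    have h5 : Gc f x z ≤ Gc f x (z + w) - Gc f x w :=
      ciSup_le fun n => by linarith [h4 n]
    linarith

lemma Gc_smul (hf : ∀ z, 0 ≤ z → 0 ≤ f z) (hx : 0 ≤ x) {c : ℝ} (hc : 0 < c) (z : X) : Gc f x (c • z) = c * Gc f x z := by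
  refine le_antisymm ?_ ?_
  · refine ciSup_le fun n => ?_
    set m := Nat.ceil ((n : ℝ) / c) with hm
    have h1 : (n : ℝ) ≤ c * m := by
      rw [← div_le_iff₀' hc]
      exact Nat.le_ceil _
    have h2 : (n : ℝ) • x ≤ (c * (m : ℝ)) • x := smul_mono_scalar h1 hx
    calc f (c • z ⊓ (n : ℝ) • x) ≤ f (c • z ⊓ (c * (m : ℝ)) • x) :=
          fmono hf (inf_le_inf_left _ h2)
      _ = f (c • (z ⊓ (m : ℝ) • x)) := by rw [smul_inf' hc, mul_smul]
      _ = c * f (z ⊓ (m : ℝ) • x) := by rw [map_smul, smul_eq_mul]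
      _ ≤ c * Gc f x z := mul_le_mul_of_nonneg_left (le_ciSup (Gc_bdd hf z) m) hc.le
  · have h6 : ∀ m : ℕ, c * f (z ⊓ (m : ℝ) • x) ≤ Gc f x (c • z) := by
      intro m
      set n := Nat.ceil (c * (m : ℝ)) with hn
      have h1 : c * (m : ℝ) ≤ (n : ℝ) := Nat.le_ceil _
      calc c * f (z ⊓ (m : ℝ) • x) = f (c • (z ⊓ (m : ℝ) • x)) := by
            rw [map_smul, smul_eq_mul]
        _ = f (c • z ⊓ (c * (m : ℝ)) • x) := by rw [smul_inf' hc, mul_smul]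
        _ ≤ f (c • z ⊓ (n : ℝ) • x) :=
            fmono hf (inf_le_inf_left _ (smul_mono_scalar h1 hx))
        _ ≤ Gc f x (c • z) := le_ciSup (Gc_bdd hf (c • z)) n
    have h7 : Gc f x z ≤ Gc f x (c • z) / c := by
      refine ciSup_le fun m => ?_
      rw [le_div_iff₀ hc]
      linarith [h6 m]
    calc c * Gc f x z ≤ c * (Gc f x (c • z) / c) := mul_le_mul_of_nonneg_left h7 hc.le
      _ = Gc f x (c • z) := by field_simp

lemma Gc_zero (hf : ∀ z, 0 ≤ z → 0 ≤ f z) (hx : 0 ≤ x) : Gc f x 0 = 0 := by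
  refine le_antisymm (ciSup_le fun n => ?_) (Gc_nonneg hf le_rfl)
  have h1 : (0 : X) ⊓ (n : ℝ) • x = 0 :=
    inf_eq_left.2 (smul_nonneg (Nat.cast_nonneg n) hx)
  rw [h1, map_zero]

lemma Gc_self (hf : ∀ z, 0 ≤ z → 0 ≤ f z) (hx : 0 ≤ x) : Gc f x x = f x := by
  refine le_antisymm (Gc_le hf x) ?_
  have h1 : f (x ⊓ ((1 : ℕ) : ℝ) • x) = f x := by norm_num
  calc f x = f (x ⊓ ((1 : ℕ) : ℝ) • x) := h1.symm
    _ ≤ Gc f x x := le_ciSup (Gc_bdd hf x) 1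

lemma Gc_disj (hf : ∀ z, 0 ≤ z → 0 ≤ f z) (hx : 0 ≤ x) {y : X} (hy : 0 ≤ y) (hxy : x ⊓ y = 0) : Gc f x y = 0 := by
  have hn : ∀ n : ℕ, y ⊓ (n : ℝ) • x = 0 := by
    intro n
    induction n with
    | zero => rw [Nat.cast_zero, zero_smul]; exact inf_eq_right.2 hy
    | succ k ih =>
      have h1 : ((k + 1 : ℕ) : ℝ) • x = (k : ℝ) • x + x := by
        rw [Nat.cast_add, Nat.cast_one, add_smul, one_smul]
      have h2 : 0 ≤ y ⊓ ((k + 1 : ℕ) : ℝ) • x := by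
        refine le_inf hy ?_
        rw [h1]
        exact add_nonneg (smul_nonneg (Nat.cast_nonneg k) hx) hx
      refine le_antisymm ?_ h2
      calc y ⊓ ((k + 1 : ℕ) : ℝ) • x = ((k : ℝ) • x + x) ⊓ y := by rw [h1, inf_comm]
        _ ≤ (k : ℝ) • x ⊓ y + x ⊓ y :=
            inf_add_le_of_nonneg (smul_nonneg (Nat.cast_nonneg k) hx) hx hy
        _ = y ⊓ (k : ℝ) • x + 0 := by rw [inf_comm ((k : ℝ) • x) y, hxy]
        _ = 0 := by rw [ih, add_zero]
  refine le_antisymm (ciSup_le fun n => ?_) (Gc_nonneg hf hy)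
  rw [hn n, map_zero]

end

end st15

namespace st15

noncomputable section

variable {X : Type*} [NormedAddCommGroup X] [Lattice X] [IsOrderedAddMonoid X] [HasSolidNorm X]
  [NormedSpace ℝ X] [PosSMulStrictMono ℝ X] [PosSMulReflectLT ℝ X]
  [CompleteSpace X]

/-- The state space determined by the unit `e`. -/
def Sset (e : X) : Set (WeakDual ℝ X) := {φ | (∀ z, 0 ≤ z → 0 ≤ φ z) ∧ φ e = 1}

lemma wmono {φ : WeakDual ℝ X} (hpos : ∀ z, 0 ≤ z → 0 ≤ φ z) {a b : X} (h : a ≤ b) :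
    φ a ≤ φ b := by
  have h1 := hpos (b - a) (sub_nonneg.2 h)
  rw [map_sub] at h1
  linarith

lemma S_bound {e : X} (hdom : ∀ z : X, |z| ≤ ‖z‖ • e) {φ : WeakDual ℝ X}
    (hpos : ∀ z, 0 ≤ z → 0 ≤ φ z) (hφe : φ e = 1) (z : X) : |φ z| ≤ ‖z‖ := by
  have h3 : φ |z| ≤ φ (‖z‖ • e) := by
    refine wmono hpos ?_
    have := hdom |z|
    rwa [abs_abs, norm_abs_eq_norm] at this
  have h4 : φ (‖z‖ • e) = ‖z‖ := by
    rw [map_smul, hφe, smul_eq_mul, mul_one]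
  have h1 : φ z ≤ φ |z| := wmono hpos (le_abs_self z)
  have h2 : φ (-z) ≤ φ |z| := wmono hpos (neg_le_abs z)
  rw [map_neg] at h2
  rw [abs_le]
  constructor <;> linarith

/-! ### Extreme states are lattice homomorphisms -/

lemma extreme_disjoint {e : X} (he0 : 0 ≤ e) (hdom : ∀ z : X, |z| ≤ ‖z‖ • e)
    {φ : WeakDual ℝ X} (hφ : φ ∈ Set.extremePoints ℝ (Sset e))
    {x y : X} (hx : 0 ≤ x) (hy : 0 ≤ y) (hxy : x ⊓ y = 0) : φ x = 0 ∨ φ y = 0 := by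
  by_contra hcon
  push_neg at hcon
  obtain ⟨⟨hφpos, hφe⟩, hext⟩ := hφ
  set f : X →L[ℝ] ℝ := WeakDual.toStrongDual φ with hfdef
  have hfφ : ∀ z : X, f z = φ z := fun z => rfl
  have hf : ∀ z, 0 ≤ z → 0 ≤ f z := hφpos
  have hfe : f e = 1 := hφe
  have hpx : 0 < φ x := (hφpos x hx).lt_of_ne (Ne.symm hcon.1)
  have hpy : 0 < φ y := (hφpos y hy).lt_of_ne (Ne.symm hcon.2)
  have hdom' : ∀ z : X, 0 ≤ z → z ≤ ‖z‖ • e := by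
    intro z hz
    have := hdom z
    rwa [abs_of_nonneg hz] at this
  -- the component functional
  set g0 : X → ℝ := fun z => Gc f x z⁺ - Gc f x z⁻ with hg0
  have hg0nonneg : ∀ z : X, 0 ≤ z → g0 z = Gc f x z := by
    intro z hz
    rw [hg0]
    simp only
    rw [posPart_eq_self.2 hz, negPart_eq_zero.2 hz, Gc_zero hf hx, sub_zero]
  have key : ∀ a b : X, (a + b)⁺ + (a⁻ + b⁻) = (a + b)⁻ + (a⁺ + b⁺) := by
    intro a b
    have h0 : (a + b)⁺ + (a⁻ + b⁻) - ((a + b)⁻ + (a⁺ + b⁺))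
        = ((a + b)⁺ - (a + b)⁻) - ((a⁺ - a⁻) + (b⁺ - b⁻)) := by abel
    rw [posPart_sub_negPart, posPart_sub_negPart, posPart_sub_negPart] at h0
    have h1 : (a + b)⁺ + (a⁻ + b⁻) - ((a + b)⁻ + (a⁺ + b⁺)) = 0 := by rw [h0]; abel
    exact sub_eq_zero.1 h1
  have hGadd : ∀ {z w : X}, 0 ≤ z → 0 ≤ w → Gc f x (z + w) = Gc f x z + Gc f x w :=
    fun hz hw => Gc_add hf hx hz hw
  have hg0add : ∀ a b : X, g0 (a + b) = g0 a + g0 b := by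
    intro a b
    have hk := key a b
    have h1 : Gc f x ((a + b)⁺ + (a⁻ + b⁻)) = Gc f x ((a + b)⁻ + (a⁺ + b⁺)) := by rw [hk]
    rw [hGadd (posPart_nonneg _) (add_nonneg (negPart_nonneg _) (negPart_nonneg _)),
      hGadd (negPart_nonneg _) (add_nonneg (posPart_nonneg _) (posPart_nonneg _)),
      hGadd (negPart_nonneg _) (negPart_nonneg _),
      hGadd (posPart_nonneg _) (posPart_nonneg _)] at h1
    rw [hg0]
    simp only
    linarith
  have hg0neg : ∀ a : X, g0 (-a) = - g0 a := by
    intro a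
    rw [hg0]
    simp only
    rw [posPart_neg, negPart_neg]
    ring
  have hg0smul : ∀ (c : ℝ) (a : X), g0 (c • a) = c * g0 a := by
    have hgpos : ∀ (c : ℝ), 0 < c → ∀ a : X, g0 (c • a) = c * g0 a := by
      intro c hc a
      rw [hg0]
      simp only
      rw [smul_posPart hc, smul_negPart hc, Gc_smul hf hx hc, Gc_smul hf hx hc]
      ring
    intro c a
    rcases lt_trichotomy c 0 with h | h | h
    · have h1 : c • a = -((-c) • a) := by rw [neg_smul, neg_neg]
      rw [h1, hg0neg, hgpos (-c) (by linarith) a]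
      ring
    · subst h
      rw [zero_smul, hg0]
      simp only
      rw [posPart_zero, negPart_zero, Gc_zero hf hx]
      ring
    · exact hgpos c h a
  have hGle : ∀ z : X, 0 ≤ z → Gc f x z ≤ f z := fun z _ => Gc_le hf z
  have hfz_bound : ∀ w : X, 0 ≤ w → f w ≤ ‖w‖ := by
    intro w hw
    calc f w ≤ f (‖w‖ • e) := fmono hf (hdom' w hw)
      _ = ‖w‖ := by rw [map_smul, smul_eq_mul, hfe, mul_one]
  have hbound : ∀ z : X, |g0 z| ≤ 1 * ‖z‖ := by
    intro z
    rw [one_mul, abs_le]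
    have h1 : 0 ≤ Gc f x z⁺ := Gc_nonneg hf (posPart_nonneg z)
    have h2 : 0 ≤ Gc f x z⁻ := Gc_nonneg hf (negPart_nonneg z)
    have h3 : Gc f x z⁺ ≤ ‖z‖ :=
      (hGle _ (posPart_nonneg z)).trans ((hfz_bound _ (posPart_nonneg z)).trans
        (norm_posPart_le z))
    have h4 : Gc f x z⁻ ≤ ‖z‖ :=
      (hGle _ (negPart_nonneg z)).trans ((hfz_bound _ (negPart_nonneg z)).trans
        (norm_negPart_le z))
    constructor
    · rw [hg0]; simp only; linarith
    · rw [hg0]; simp only; linarith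
  set glin : X →ₗ[ℝ] ℝ :=
    { toFun := g0
      map_add' := hg0add
      map_smul' := fun c a => by rw [RingHom.id_apply, smul_eq_mul]; exact hg0smul c a } with hglin
  set gL : X →L[ℝ] ℝ := glin.mkContinuous 1 hbound with hgL
  have hgLapp : ∀ z : X, gL z = g0 z := fun z => rfl
  set gW : WeakDual ℝ X := StrongDual.toWeakDual gL with hgW
  have hgWapp : ∀ z : X, gW z = g0 z := fun z => rfl
  set α : ℝ := Gc f x e with hα
  have hα0 : 0 ≤ α := Gc_nonneg hf he0
  have hα1 : α ≤ 1 := by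
    have h := Gc_le (f := f) (x := x) hf e
    rw [hfe] at h
    exact h
  have hGx : Gc f x x = f x := Gc_self hf hx
  have hGy : Gc f x y = 0 := Gc_disj hf hx hy hxy
  -- scaling bounds
  have hgle : ∀ z : X, 0 ≤ z → Gc f x z ≤ ‖z‖ * α := by
    intro z hz
    rcases eq_or_ne z 0 with rfl | hz0
    · rw [Gc_zero hf hx, norm_zero, zero_mul]
    · have hzn : 0 < ‖z‖ := norm_pos_iff.2 hz0
      calc Gc f x z ≤ Gc f x (‖z‖ • e) := Gc_mono hf (hdom' z hz)
        _ = ‖z‖ * α := Gc_smul hf hx hzn e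
  have hhle : ∀ z : X, 0 ≤ z → f z - Gc f x z ≤ ‖z‖ * (1 - α) := by
    intro z hz
    rcases eq_or_ne z 0 with rfl | hz0
    · rw [Gc_zero hf hx, map_zero, norm_zero, zero_mul, sub_zero]
    · have hzn : 0 < ‖z‖ := norm_pos_iff.2 hz0
      set w := ‖z‖ • e with hw
      have hzw : z ≤ w := hdom' z hz
      have h8 : Gc f x w = Gc f x z + Gc f x (w - z) := by
        have := hGadd hz (sub_nonneg.2 hzw)
        rw [add_sub_cancel] at this
        exact this
      have h9 : Gc f x (w - z) ≤ f (w - z) := Gc_le hf _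
      have h10 : f (w - z) = f w - f z := map_sub f w z
      have h11 : f w = ‖z‖ := by rw [hw, map_smul, smul_eq_mul, hfe, mul_one]
      have h12 : Gc f x w = ‖z‖ * α := by rw [hw]; exact Gc_smul hf hx hzn e
      linarith
  rcases eq_or_lt_of_le hα0 with hA | hA
  · -- α = 0 : then Gc x = 0, contradiction with f x > 0
    have h1 := hgle x hx
    rw [← hA, mul_zero] at h1
    have h2 : 0 ≤ Gc f x x := Gc_nonneg hf hx
    rw [hGx] at h1 h2
    rw [hfφ] at h1
    linarith
  rcases eq_or_lt_of_le hα1 with hB | hB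
  · -- α = 1 : then f y ≤ 0, contradiction
    have h1 := hhle y hy
    rw [hB, sub_self, mul_zero, hGy, sub_zero, hfφ] at h1
    linarith
  -- 0 < α < 1
  have hαne : α ≠ 0 := ne_of_gt hA
  have h1αne : (1 - α) ≠ 0 := by linarith
  set ψ₁ : WeakDual ℝ X := α⁻¹ • gW with hψ₁
  set ψ₂ : WeakDual ℝ X := (1 - α)⁻¹ • (φ - gW) with hψ₂
  have hψ₁app : ∀ z : X, ψ₁ z = α⁻¹ * g0 z := fun z => rfl
  have hψ₂app : ∀ z : X, ψ₂ z = (1 - α)⁻¹ * (φ z - g0 z) := fun z => rfl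
  have hg0e : g0 e = α := hg0nonneg e he0
  have hψ₁S : ψ₁ ∈ Sset e := by
    constructor
    · intro z hz
      rw [hψ₁app]
      have h2 : 0 ≤ g0 z := by
        rw [hg0nonneg z hz]
        exact Gc_nonneg hf hz
      positivity
    · rw [hψ₁app, hg0e, inv_mul_cancel₀ hαne]
  have hψ₂S : ψ₂ ∈ Sset e := by
    constructor
    · intro z hz
      rw [hψ₂app]
      have h2 : g0 z ≤ φ z := by
        rw [hg0nonneg z hz, ← hfφ]
        exact Gc_le hf z
      have h3 : (0:ℝ) ≤ (1 - α)⁻¹ := inv_nonneg.2 (by linarith)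
      have := mul_nonneg h3 (sub_nonneg.2 h2)
      linarith [this]
    · rw [hψ₂app, hg0e, hφe, inv_mul_cancel₀ h1αne]
  have hseg : φ ∈ openSegment ℝ ψ₁ ψ₂ := by
    refine ⟨α, 1 - α, hA, by linarith, by ring, ?_⟩
    refine DFunLike.ext _ _ fun z => ?_
    show α * ψ₁ z + (1 - α) * ψ₂ z = φ z
    rw [hψ₁app, hψ₂app]
    field_simp
    ring
  obtain h1 := hext hψ₁S hψ₂S hseg
  -- h1 : ψ₁ = φ, evaluate at x
  have h2 : ψ₁ x = φ x := by rw [h1]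
  rw [hψ₁app] at h2
  have h3 : g0 x = φ x := by rw [hg0nonneg x hx, hGx, hfφ]
  rw [h3] at h2
  have h5 : α * (α⁻¹ * φ x) = α * φ x := by rw [h2]
  rw [← mul_assoc, mul_inv_cancel₀ hαne, one_mul] at h5
  have h6 : α * φ x < 1 * φ x := mul_lt_mul_of_pos_right hB hpx
  rw [one_mul] at h6
  linarith

lemma extreme_latticeHom {e : X} (he0 : 0 ≤ e) (hdom : ∀ z : X, |z| ≤ ‖z‖ • e)
    {φ : WeakDual ℝ X} (hφ : φ ∈ Set.extremePoints ℝ (Sset e)) :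
    ∀ v w : X, φ (v ⊔ w) = max (φ v) (φ w) := by
  have hφpos := hφ.1.1
  intro v w
  set c := v ⊓ w with hc
  have hsub : (v - c) ⊓ (w - c) = 0 := by
    have h1 : (v + -c) ⊓ (w + -c) = v ⊓ w + -c := (inf_add v w (-c)).symm
    rw [← sub_eq_add_neg, ← sub_eq_add_neg, ← sub_eq_add_neg] at h1
    rw [h1, hc, sub_self]
  have hdisj := extreme_disjoint he0 hdom hφ
    (sub_nonneg.2 (inf_le_left (b := w))) (sub_nonneg.2 (inf_le_right (a := v))) hsub
  have hel : φ c ≤ φ v := wmono hφpos inf_le_left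
  have her : φ c ≤ φ w := wmono hφpos inf_le_right
  have hsum : φ c + φ (v ⊔ w) = φ v + φ w := by
    rw [← map_add, hc, inf_add_sup, map_add]
  rcases hdisj with h | h <;> rw [map_sub] at h
  · -- φ v = φ c
    have h1 : φ v = φ c := by linarith
    have h2 : max (φ v) (φ w) = φ w := max_eq_right (h1 ▸ her)
    rw [h2]
    linarith
  · have h1 : φ w = φ c := by linarith
    have h2 : max (φ v) (φ w) = φ v := max_eq_left (h1 ▸ hel)
    rw [h2]
    linarith

/-! ### Existence of norming lattice homomorphisms -/

lemma exists_latticeHom {e : X} (he0 : 0 ≤ e) (he1 : ‖e‖ = 1)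
    (hdom : ∀ z : X, |z| ≤ ‖z‖ • e) (u : X) (hu : 0 ≤ u) :
    ∃ φ : WeakDual ℝ X, (∀ z, 0 ≤ z → 0 ≤ φ z) ∧ φ e = 1 ∧
      (∀ v w : X, φ (v ⊔ w) = max (φ v) (φ w)) ∧ φ u = ‖u‖ := by
  haveI : LocallyConvexSpace ℝ (WeakDual ℝ X) := WeakBilin.locallyConvexSpace
  set S := Sset e with hS
  have hSbd : ∀ φ ∈ S, ∀ z : X, |φ z| ≤ ‖z‖ := fun φ hφ z =>
    S_bound hdom hφ.1 hφ.2 z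
  have hSclosed : IsClosed S := by
    have h1 : IsClosed {φ : WeakDual ℝ X | ∀ z, 0 ≤ z → 0 ≤ φ z} := by
      have : {φ : WeakDual ℝ X | ∀ z, 0 ≤ z → 0 ≤ φ z} =
          ⋂ z ∈ {z : X | 0 ≤ z}, {φ : WeakDual ℝ X | 0 ≤ φ z} := by
        ext φ; simp [Set.mem_iInter]
      rw [this]
      exact isClosed_biInter fun z hz =>
        isClosed_le continuous_const (WeakDual.eval_continuous z)
    have h2 : IsClosed {φ : WeakDual ℝ X | φ e = 1} :=
      isClosed_eq (WeakDual.eval_continuous e) continuous_const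
    exact h1.inter h2
  have hSsub : S ⊆ WeakDual.toStrongDual ⁻¹' Metric.closedBall 0 1 := by
    intro φ hφ
    simp only [Set.mem_preimage, Metric.mem_closedBall, dist_zero_right]
    refine ContinuousLinearMap.opNorm_le_bound _ zero_le_one fun z => ?_
    rw [one_mul]
    have := hSbd φ hφ z
    rwa [Real.norm_eq_abs]
  have hScomp : IsCompact S :=
    (WeakDual.isCompact_closedBall (𝕜 := ℝ) (E := X) 0 1).of_isClosed_subset hSclosed hSsub
  set t := {φ ∈ S | φ u = ‖u‖} with ht
  have htsub : t ⊆ S := fun φ hφ => hφ.1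
  obtain ⟨g, hgpos, hgnorm, hgu⟩ := exists_norming u hu
  obtain ⟨h₀, hh₀pos, hh₀norm, hh₀e⟩ := exists_norming e he0
  have hge : g e ≤ 1 := by
    calc g e ≤ |g e| := le_abs_self _
      _ ≤ ‖g‖ * ‖e‖ := by rw [← Real.norm_eq_abs]; exact g.le_opNorm e
      _ ≤ 1 * 1 := mul_le_mul hgnorm he1.le (norm_nonneg e) zero_le_one
      _ = 1 := one_mul 1
  have hh₀e1 : h₀ e = 1 := by rw [hh₀e, he1]
  set g' : WeakDual ℝ X := StrongDual.toWeakDual (g + (1 - g e) • h₀) with hg'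
  have hg'app : ∀ z : X, g' z = g z + (1 - g e) * h₀ z := fun z => rfl
  have hg'pos : ∀ z, 0 ≤ z → 0 ≤ g' z := by
    intro z hz
    rw [hg'app]
    have h1 := hgpos z hz
    have h2 := hh₀pos z hz
    have h3 : (0:ℝ) ≤ 1 - g e := by linarith
    positivity
  have hg'e : g' e = 1 := by
    rw [hg'app, hh₀e1]
    ring
  have hg'S : g' ∈ S := ⟨hg'pos, hg'e⟩
  have hg'u : g' u = ‖u‖ := by
    have h1 : g' u ≤ ‖u‖ := by
      have := hSbd g' hg'S u
      exact (le_abs_self _).trans this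
    have h2 : ‖u‖ ≤ g' u := by
      rw [hg'app, hgu]
      have h3 := hh₀pos u hu
      have h4 : (0:ℝ) ≤ 1 - g e := by linarith
      nlinarith
    linarith
  have htne : t.Nonempty := ⟨g', hg'S, hg'u⟩
  have htclosed : IsClosed t :=
    hSclosed.inter (isClosed_eq (WeakDual.eval_continuous u) continuous_const)
  have htcomp : IsCompact t := hScomp.of_isClosed_subset htclosed htsub
  have htext : IsExtreme ℝ S t := by
    constructor
    · exact htsub
    · rintro φ₁ hφ₁ φ₂ hφ₂ ψ hψ ⟨a, b, ha, hb, hab, hsum⟩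
      have h1 : ψ u = ‖u‖ := hψ.2
      have h2 : φ₁ u ≤ ‖u‖ := (le_abs_self _).trans (hSbd φ₁ hφ₁ u)
      have h3 : φ₂ u ≤ ‖u‖ := (le_abs_self _).trans (hSbd φ₂ hφ₂ u)
      have h4 : ψ u = a * φ₁ u + b * φ₂ u := by
        rw [← hsum]
        rfl
      have hsum' : a * φ₁ u + b * φ₂ u = ‖u‖ := by rw [← h4]; exact h1
      have hmul : a * ‖u‖ + b * ‖u‖ = ‖u‖ := by rw [← add_mul, hab, one_mul]
      have h5 : φ₁ u = ‖u‖ := by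
        by_contra hne
        have hlt := lt_of_le_of_ne h2 hne
        have hl2 := mul_lt_mul_of_pos_left hlt ha
        have hl3 := mul_le_mul_of_nonneg_left h3 hb.le
        linarith
      have h6 : φ₂ u = ‖u‖ := by
        by_contra hne
        have hlt := lt_of_le_of_ne h3 hne
        have hl2 := mul_lt_mul_of_pos_left hlt hb
        have hl3 := mul_le_mul_of_nonneg_left h2 ha.le
        linarith
      exact ⟨hφ₁, h5⟩
  obtain ⟨φ, hφt⟩ := htcomp.extremePoints_nonempty htne
  have hφext : φ ∈ Set.extremePoints ℝ S := htext.extremePoints_subset_extremePoints hφt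
  exact ⟨φ, hφext.1.1, hφext.1.2, extreme_latticeHom he0 hdom hφext, hφt.1.2⟩

/-! ### Composition with a homeomorphism as a linear isometry equivalence -/

def cmpIso {A B : Type*} [TopologicalSpace A] [TopologicalSpace B]
    [CompactSpace A] [CompactSpace B] (h : A ≃ₜ B) : C(B, ℝ) ≃ₗᵢ[ℝ] C(A, ℝ) where
  toLinearEquiv :=
    { toFun := fun g => g.comp (h : C(A, B))
      map_add' := fun g₁ g₂ => by ext a; simp
      map_smul' := fun c g => by ext a; simp
      invFun := fun g => g.comp (h.symm : C(B, A))
      left_inv := fun g => by ext b; simp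
      right_inv := fun g => by ext a; simp }
  norm_map' := by
    intro g
    refine le_antisymm ?_ ?_
    · refine (ContinuousMap.norm_le _ (norm_nonneg g)).2 fun a => ?_
      exact g.norm_coe_le_norm (h a)
    · refine (ContinuousMap.norm_le _ (norm_nonneg _)).2 fun b => ?_
      have h1 : g b = (g.comp (h : C(A, B))) (h.symm b) := by simp
      rw [h1]
      exact (g.comp (h : C(A, B))).norm_coe_le_norm (h.symm b)

lemma cmpIso_sup {A B : Type*} [TopologicalSpace A] [TopologicalSpace B]
    [CompactSpace A] [CompactSpace B] (h : A ≃ₜ B) (g₁ g₂ : C(B, ℝ)) :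
    cmpIso h (g₁ ⊔ g₂) = cmpIso h g₁ ⊔ cmpIso h g₂ := by
  ext a
  simp [cmpIso, ContinuousMap.sup_apply]

end

end st15

theorem statement15 [TopologicalSpace.SeparableSpace X]
    (hAM : ∀ x y : X, 0 ≤ x → 0 ≤ y → ‖x ⊔ y‖ = max ‖x‖ ‖y‖)
    (hatt : ∀ f : X →L[ℝ] ℝ, (∀ x : X, 0 ≤ x → 0 ≤ f x) →
      ∃ x ∈ Metric.closedBall (0 : X) 1, f x = ‖f‖) :
    ∃ (K : CompHaus) (T : X ≃ₗᵢ[ℝ] C(K, ℝ)), ∀ v w : X, T (v ⊔ w) = T v ⊔ T w := by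
  classical
  rcases subsingleton_or_nontrivial X with hsub | hnt
  · -- trivial case
    haveI hT2 : T2Space (ULift.{_} Empty) := ⟨fun a => isEmptyElim a⟩
    haveI hSubC : Subsingleton C(ULift.{_} Empty, ℝ) :=
      ⟨fun f g => ContinuousMap.ext fun a => isEmptyElim a.down⟩
    have T : X ≃ₗᵢ[ℝ] C(ULift.{_} Empty, ℝ) :=
      { toLinearEquiv :=
          { toFun := fun _ => 0
            map_add' := fun _ _ => (Subsingleton.elim _ _)
            map_smul' := fun _ _ => (Subsingleton.elim _ _)
            invFun := fun _ => 0
            left_inv := fun xx => Subsingleton.elim _ _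
            right_inv := fun g => Subsingleton.elim _ _ }
        norm_map' := fun xx => by
          have h1 : xx = 0 := Subsingleton.elim _ _
          simp [h1] }
    exact ⟨CompHaus.of (ULift Empty), T, fun v w => hSubC.elim _ _⟩
  · -- main case
    obtain ⟨e, he0, he1, hunit⟩ := st15.exists_unit hAM hatt
    have hdom : ∀ z : X, |z| ≤ ‖z‖ • e := by
      intro z
      rcases eq_or_ne z 0 with rfl | hz
      · simp
      · have h1 : 0 < ‖z‖ := norm_pos_iff.2 hz
        have h2 : ‖(‖z‖⁻¹ • z)‖ ≤ 1 := by
          rw [norm_smul, norm_inv, norm_norm, inv_mul_cancel₀ h1.ne']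
        have h3 := hunit _ h2
        have h4 : |(‖z‖⁻¹ • z)| = ‖z‖⁻¹ • |z| :=
          st15.abs_smul_of_nonneg (inv_nonneg.2 (norm_nonneg z)) z
        calc |z| = ‖z‖ • (‖z‖⁻¹ • |z|) := by
              rw [smul_smul, mul_inv_cancel₀ h1.ne', one_smul]
          _ = ‖z‖ • |‖z‖⁻¹ • z| := by rw [h4]
          _ ≤ ‖z‖ • e := st15.smul_mono_vec (norm_nonneg z) h3
    -- the lattice spectrum
    set Kset : Set (WeakDual ℝ X) :=
      {φ | (∀ z, 0 ≤ z → 0 ≤ φ z) ∧ φ e = 1 ∧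
        ∀ v w : X, φ (v ⊔ w) = max (φ v) (φ w)} with hKset
    have hKclosed : IsClosed Kset := by
      have h1 : IsClosed {φ : WeakDual ℝ X | ∀ z, 0 ≤ z → 0 ≤ φ z} := by
        have heq : {φ : WeakDual ℝ X | ∀ z, 0 ≤ z → 0 ≤ φ z} =
            ⋂ z ∈ {z : X | 0 ≤ z}, {φ : WeakDual ℝ X | 0 ≤ φ z} := by
          ext φ; simp [Set.mem_iInter]
        rw [heq]
        exact isClosed_biInter fun z hz =>
          isClosed_le continuous_const (WeakDual.eval_continuous z)
      have h2 : IsClosed {φ : WeakDual ℝ X | φ e = 1} :=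
        isClosed_eq (WeakDual.eval_continuous e) continuous_const
      have h3 : IsClosed {φ : WeakDual ℝ X | ∀ v w : X, φ (v ⊔ w) = max (φ v) (φ w)} := by
        have heq : {φ : WeakDual ℝ X | ∀ v w : X, φ (v ⊔ w) = max (φ v) (φ w)} =
            ⋂ (v : X) (w : X), {φ : WeakDual ℝ X | φ (v ⊔ w) = max (φ v) (φ w)} := by
          ext φ; simp [Set.mem_iInter]
        rw [heq]
        exact isClosed_iInter fun v => isClosed_iInter fun w =>
          isClosed_eq (WeakDual.eval_continuous _)
            ((WeakDual.eval_continuous v).max (WeakDual.eval_continuous w))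
      exact h1.inter (h2.inter h3)
    have hKsub : Kset ⊆ WeakDual.toStrongDual ⁻¹' Metric.closedBall 0 1 := by
      intro φ hφ
      simp only [Set.mem_preimage, Metric.mem_closedBall, dist_zero_right]
      refine ContinuousLinearMap.opNorm_le_bound _ zero_le_one fun z => ?_
      rw [one_mul, Real.norm_eq_abs]
      exact st15.S_bound hdom hφ.1 hφ.2.1 z
    have hKcomp : IsCompact Kset :=
      (WeakDual.isCompact_closedBall (𝕜 := ℝ) (E := X) 0 1).of_isClosed_subset hKclosed hKsub
    haveI hKcs : CompactSpace ↥Kset := isCompact_iff_compactSpace.1 hKcomp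
    -- the canonical map
    have hcont : ∀ xx : X, Continuous fun φ : ↥Kset => (φ : WeakDual ℝ X) xx := fun xx =>
      (WeakDual.eval_continuous xx).comp continuous_subtype_val
    set Tlin : X →ₗ[ℝ] C(↥Kset, ℝ) :=
      { toFun := fun xx => ⟨fun φ => (φ : WeakDual ℝ X) xx, hcont xx⟩
        map_add' := fun a b => by
          ext φ
          simp only [ContinuousMap.coe_mk, ContinuousMap.add_apply]
          exact map_add _ a b
        map_smul' := fun c a => by
          ext φ
          simp only [ContinuousMap.coe_mk, ContinuousMap.smul_apply, RingHom.id_apply]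
          exact map_smul _ c a } with hTlin
    have hTapp : ∀ (xx : X) (φ : ↥Kset), Tlin xx φ = (φ : WeakDual ℝ X) xx :=
      fun xx φ => rfl
    have hTsup : ∀ v w : X, Tlin (v ⊔ w) = Tlin v ⊔ Tlin w := by
      intro v w
      ext φ
      rw [ContinuousMap.sup_apply]
      exact φ.2.2.2 v w
    have hTnorm : ∀ xx : X, ‖Tlin xx‖ = ‖xx‖ := by
      intro xx
      refine le_antisymm ?_ ?_
      · refine (ContinuousMap.norm_le _ (norm_nonneg xx)).2 fun φ => ?_
        rw [hTapp, Real.norm_eq_abs]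
        exact st15.S_bound hdom φ.2.1 φ.2.2.1 xx
      · obtain ⟨φ, hφpos, hφe, hφlat, hφu⟩ :=
          st15.exists_latticeHom he0 he1 hdom |xx| (abs_nonneg xx)
        have hφK : φ ∈ Kset := ⟨hφpos, hφe, hφlat⟩
        have habs : φ |xx| = |φ xx| := by
          have h1 : |xx| = xx ⊔ (-xx) := rfl
          rw [h1, hφlat xx (-xx), map_neg]
          exact (abs_eq_max_neg (a := φ xx)).symm
        have h2 : |φ xx| = ‖xx‖ := by
          rw [← habs, hφu, norm_abs_eq_norm]
        calc ‖xx‖ = |φ xx| := h2.symm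
          _ = ‖Tlin xx ⟨φ, hφK⟩‖ := by rw [hTapp, Real.norm_eq_abs]
          _ ≤ ‖Tlin xx‖ := (Tlin xx).norm_coe_le_norm _
    set T₁ : X →ₗᵢ[ℝ] C(↥Kset, ℝ) := ⟨Tlin, hTnorm⟩ with hT₁
    have hT₁app : ∀ xx : X, T₁ xx = Tlin xx := fun _ => rfl
    -- surjectivity via lattice Stone-Weierstrass
    set L : Set C(↥Kset, ℝ) := Set.range T₁ with hL
    have hLclosed : IsClosed L := T₁.isometry.isClosedEmbedding.isClosed_range
    have hLne : L.Nonempty := ⟨T₁ 0, 0, rfl⟩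
    have hsup_mem : ∀ g₁ ∈ L, ∀ g₂ ∈ L, g₁ ⊔ g₂ ∈ L := by
      rintro _ ⟨a, rfl⟩ _ ⟨b, rfl⟩
      exact ⟨a ⊔ b, hTsup a b⟩
    have hinf_mem : ∀ g₁ ∈ L, ∀ g₂ ∈ L, g₁ ⊓ g₂ ∈ L := by
      rintro _ ⟨a, rfl⟩ _ ⟨b, rfl⟩
      refine ⟨a ⊓ b, ?_⟩
      have h1 : a ⊓ b = -((-a) ⊔ (-b)) := by rw [neg_sup, neg_neg, neg_neg]
      have hTsup₁ : ∀ v w : X, T₁ (v ⊔ w) = T₁ v ⊔ T₁ w := hTsup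
      rw [h1, map_neg, hTsup₁, map_neg, map_neg, neg_sup, neg_neg, neg_neg]
    have hTe : ∀ φ : ↥Kset, T₁ e φ = 1 := fun φ => φ.2.2.1
    have hsep : L.SeparatesPointsStrongly := by
      intro v p q
      rcases eq_or_ne p q with rfl | hpq
      · refine ⟨T₁ ((v p) • e), ⟨_, rfl⟩, ?_, ?_⟩ <;>
          · show Tlin ((v p) • e) _ = v p
            rw [map_smul]
            show v p • (Tlin e _) = v p
            rw [show Tlin e _ = (1:ℝ) from hTe _, smul_eq_mul, mul_one]
      · obtain ⟨z, hz⟩ : ∃ z : X, (p : WeakDual ℝ X) z ≠ (q : WeakDual ℝ X) z := by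
          by_contra hcon
          push_neg at hcon
          exact hpq (Subtype.ext (DFunLike.ext _ _ hcon))
        set d : ℝ := (p : WeakDual ℝ X) z - (q : WeakDual ℝ X) z with hd
        have hdne : d ≠ 0 := sub_ne_zero.2 hz
        set b : ℝ := (v p - v q) / d with hb
        set a : ℝ := v p - b * ((p : WeakDual ℝ X) z) with ha
        refine ⟨T₁ (a • e + b • z), ⟨_, rfl⟩, ?_, ?_⟩
        · show Tlin (a • e + b • z) p = v p
          rw [map_add, map_smul, map_smul]
          show a • Tlin e p + b • Tlin z p = v p
          rw [show Tlin e p = (1:ℝ) from hTe p, hTapp]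
          simp only [smul_eq_mul, mul_one]
          rw [ha]
          ring
        · show Tlin (a • e + b • z) q = v q
          rw [map_add, map_smul, map_smul]
          show a • Tlin e q + b • Tlin z q = v q
          rw [show Tlin e q = (1:ℝ) from hTe q, hTapp]
          simp only [smul_eq_mul, mul_one]
          rw [ha, hb]
          field_simp
          ring
    have hLtop : L = Set.univ := by
      have h1 := ContinuousMap.sublattice_closure_eq_top L hLne hinf_mem hsup_mem hsep
      have h2 : closure L = L := hLclosed.closure_eq
      rw [h2] at h1
      exact h1
    have hsurj : Function.Surjective T₁ := by
      intro g
      have : g ∈ L := by rw [hLtop]; trivial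
      exact this
    set T₀ : X ≃ₗᵢ[ℝ] C(↥Kset, ℝ) := LinearIsometryEquiv.ofSurjective T₁ hsurj with hT₀
    have hT₀app : ∀ xx : X, T₀ xx = T₁ xx := fun _ => rfl
    -- smallification of K
    have : Nonempty X := ⟨0⟩
    set u : ℕ → X := TopologicalSpace.denseSeq X with hu
    have hdense : DenseRange u := TopologicalSpace.denseRange_denseSeq X
    set Φ : ↥Kset → (ℕ → ℝ) := fun φ n => (φ : WeakDual ℝ X) (u n) with hΦ
    have hΦcont : Continuous Φ := by
      refine continuous_pi fun n => ?_
      exact (WeakDual.eval_continuous (u n)).comp continuous_subtype_val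
    have hΦinj : Function.Injective Φ := by
      intro φ ψ h
      have h1 : ∀ n, (φ : WeakDual ℝ X) (u n) = (ψ : WeakDual ℝ X) (u n) :=
        fun n => congrFun h n
      have hφc : Continuous ((φ : WeakDual ℝ X) : X → ℝ) := map_continuous _
      have hψc : Continuous ((ψ : WeakDual ℝ X) : X → ℝ) := map_continuous _
      have h2 : ((φ : WeakDual ℝ X) : X → ℝ) = ((ψ : WeakDual ℝ X) : X → ℝ) :=
        Continuous.ext_on hdense hφc hψc (by rintro _ ⟨n, rfl⟩; exact h1 n)
      exact Subtype.ext (DFunLike.ext _ _ fun z => congrFun h2 z)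
    set K1 : Set (ℕ → ℝ) := Set.range Φ with hK1
    have hK1comp : IsCompact K1 := isCompact_range hΦcont
    haveI hK1cs : CompactSpace ↥K1 := isCompact_iff_compactSpace.1 hK1comp
    set eqv : ↥Kset ≃ ↥K1 := Equiv.ofInjective Φ hΦinj with heqv
    have heqvcont : Continuous (eqv : ↥Kset → ↥K1) := by
      refine Continuous.subtype_mk hΦcont _
    set homeo1 : ↥Kset ≃ₜ ↥K1 := Continuous.homeoOfEquivCompactToT2 (f := eqv) heqvcont
    set homeo2 : ULift.{u_2} ↥K1 ≃ₜ ↥K1 := Homeomorph.ulift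
    set homeo : ULift.{u_2} ↥K1 ≃ₜ ↥Kset := homeo2.trans homeo1.symm with hhomeo
    haveI hT2u : T2Space (ULift.{u_2} ↥K1) := Homeomorph.ulift.isEmbedding.t2Space
    set W := st15.cmpIso homeo with hW
    refine ⟨CompHaus.of (ULift ↥K1), T₀.trans W, ?_⟩
    intro v w
    have h1 : T₀ (v ⊔ w) = T₀ v ⊔ T₀ w := hTsup v w
    show W (T₀ (v ⊔ w)) = W (T₀ v) ⊔ W (T₀ w)
    rw [h1, st15.cmpIso_sup]
end
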